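/- arXiv:1603.03902 — 5 statements merged into one kernel-verified Lean document; each statement's English description precedes it below -/
import Mathlib

section
/- Let d ≥ 1, ν = d/2 − 1, p_t^{(d)}(x) = (2πt)^{−d/2} e^{−x²/(2t)}. For any δ > 0 there exists a constant C_δ (depending only on δ and d) such that whenever (x+z)z > δt > 0 and 0 < θ < 1, one has θ^{d/2} ∫_{θt}^{t} p_s^{(d)}(x) p_{t−s}^{(d)}(z) ds ≤ C_δ · p_t^{(d)}(x+z) · ((x+z)/(tz))^ν · √(t/((x+z)z)). -/
open Real intervalIntegral

noncomputable def heatKernel (d : ℕ) (t x : ℝ) : ℝ :=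
  (2 * Real.pi * t) ^ (-(d : ℝ) / 2) * Real.exp (-x ^ 2 / (2 * t))

open MeasureTheory Set

set_option maxHeartbeats 1000000

lemma pow_le_factorial_mul_exp {x : ℝ} (hx : 0 ≤ x) (d : ℕ) :
    x ^ d ≤ d.factorial * Real.exp x := by
  have h := Real.sum_le_exp_of_nonneg hx (d+1)
  have h2 : x ^ d / (d.factorial:ℝ) ≤ ∑ i ∈ Finset.range (d+1), x ^ i / i.factorial :=
    Finset.single_le_sum (f := fun i => x ^ i / (i.factorial : ℝ))
      (fun i _ => by positivity) (Finset.self_mem_range_succ d)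
  have hfac : (0:ℝ) < d.factorial := by positivity
  rw [div_le_iff₀ hfac] at h2
  nlinarith [h2, mul_le_mul_of_nonneg_right h hfac.le]

lemma rpow_half_mul_exp_neg_le (d : ℕ) {y : ℝ} (hy : 0 < y) :
    y ^ ((d:ℝ)/2) * Real.exp (-y) ≤ 1 + d.factorial := by
  have hfac : (0:ℝ) < d.factorial := by positivity
  rcases le_or_gt y 1 with h1 | h1
  · have h2 : y ^ ((d:ℝ)/2) ≤ 1 := Real.rpow_le_one hy.le h1 (by positivity)
    have h3 : Real.exp (-y) ≤ 1 := Real.exp_le_one_iff.mpr (by linarith)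
    nlinarith [Real.exp_pos (-y), Real.rpow_pos_of_pos hy ((d:ℝ)/2)]
  · have h2 : y ^ ((d:ℝ)/2) ≤ y ^ (d:ℕ) := by
      rw [← Real.rpow_natCast y d]
      exact Real.rpow_le_rpow_of_exponent_le h1.le
        (by rw [div_le_iff₀ (by norm_num : (0:ℝ) < 2)]
            nlinarith [Nat.cast_nonneg (α := ℝ) d])
    have h3 : y ^ (d:ℕ) * Real.exp (-y) ≤ d.factorial := by
      have := pow_le_factorial_mul_exp (le_of_lt (lt_trans one_pos h1)) d
      rw [Real.exp_neg]
      rw [mul_inv_le_iff₀ (Real.exp_pos y)]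
      linarith
    nlinarith [Real.exp_pos (-y)]

lemma F_small (d : ℕ) (hd : 1 ≤ d) {δ w v : ℝ} (hδ : 0 < δ) (hw : δ < w)
    (hv : 0 < v) (hv2 : v ≤ 1/2) :
    v ^ (-(d:ℝ)/2) * Real.exp (-(w*(v-1)^2)/(2*v)) ≤
      (16 ^ ((d:ℝ)/2) * (1 + d.factorial) * δ ^ (-((d:ℝ)-1)/2)) / Real.sqrt w := by
  have hw0 : (0:ℝ) < w := hδ.trans hw
  set y : ℝ := w / (16 * v) with hy_def
  have hy : 0 < y := by positivity
  -- step 1 : exp bound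
  have e1 : Real.exp (-(w*(v-1)^2)/(2*v)) ≤ Real.exp (-y) := by
    apply Real.exp_le_exp.mpr
    rw [hy_def, neg_div, neg_le_neg_iff, div_le_div_iff₀ (by positivity) (by positivity)]
    have hq : (v-1)^2 ≥ 1/4 := by nlinarith
    nlinarith [mul_pos hw0 hv]
  have hvpow : (0:ℝ) < v ^ (-(d:ℝ)/2) := Real.rpow_pos_of_pos hv _
  have step1 : v ^ (-(d:ℝ)/2) * Real.exp (-(w*(v-1)^2)/(2*v)) ≤
      v ^ (-(d:ℝ)/2) * Real.exp (-y) := by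
    exact mul_le_mul_of_nonneg_left e1 hvpow.le
  -- step 2 : v^{-d/2} = (16/w)^{d/2} y^{d/2}
  have hveq : v ^ (-(d:ℝ)/2) = (16/w) ^ ((d:ℝ)/2) * y ^ ((d:ℝ)/2) := by
    rw [neg_div, Real.rpow_neg hv.le, ← Real.inv_rpow hv.le,
      ← Real.mul_rpow (by positivity) hy.le]
    congr 1
    field_simp [hy_def]
    rw [hy_def]; field_simp
  have step2 : v ^ (-(d:ℝ)/2) * Real.exp (-y) ≤ (16/w) ^ ((d:ℝ)/2) * (1 + d.factorial) := by
    rw [hveq, mul_assoc]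
    refine mul_le_mul_of_nonneg_left ?_ (by positivity)
    exact rpow_half_mul_exp_neg_le d hy
  -- step 3 : (16/w)^{d/2} ≤ 16^{d/2} δ^{-(d-1)/2} / √w
  have step3 : (16/w) ^ ((d:ℝ)/2) ≤ 16 ^ ((d:ℝ)/2) * δ ^ (-((d:ℝ)-1)/2) / Real.sqrt w := by
    rw [Real.div_rpow (by norm_num) hw0.le]
    rw [div_le_div_iff₀ (Real.rpow_pos_of_pos hw0 _) (Real.sqrt_pos.mpr hw0)]
    have hkey : Real.sqrt w ≤ δ ^ (-((d:ℝ)-1)/2) * w ^ ((d:ℝ)/2) := by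
      have h1 : Real.sqrt w = w ^ ((1:ℝ)/2) := Real.sqrt_eq_rpow w
      have h2 : w ^ ((1:ℝ)/2) = w ^ ((d:ℝ)/2) * w ^ ((1-(d:ℝ))/2) := by
        rw [← Real.rpow_add hw0]; ring_nf
      have h3 : w ^ ((1-(d:ℝ))/2) ≤ δ ^ ((1-(d:ℝ))/2) := by
        apply Real.rpow_le_rpow_of_nonpos hδ hw.le
        have : (1:ℝ) ≤ d := Nat.one_le_cast.mpr hd
        linarith
      have h4 : (-((d:ℝ)-1)/2) = ((1-(d:ℝ))/2) := by ring
      rw [h1, h2, h4, mul_comm]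
      exact mul_le_mul_of_nonneg_right h3 (Real.rpow_pos_of_pos hw0 _).le
    calc 16 ^ ((d:ℝ)/2) * Real.sqrt w ≤ 16 ^ ((d:ℝ)/2) * (δ ^ (-((d:ℝ)-1)/2) * w ^ ((d:ℝ)/2)) :=
          mul_le_mul_of_nonneg_left hkey (by positivity)
      _ = 16 ^ ((d:ℝ)/2) * δ ^ (-((d:ℝ)-1)/2) * w ^ ((d:ℝ)/2) := by ring
  calc v ^ (-(d:ℝ)/2) * Real.exp (-(w*(v-1)^2)/(2*v))
      ≤ (16/w) ^ ((d:ℝ)/2) * (1 + d.factorial) := step1.trans step2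
    _ ≤ (16 ^ ((d:ℝ)/2) * δ ^ (-((d:ℝ)-1)/2) / Real.sqrt w) * (1 + d.factorial) := by
        refine mul_le_mul_of_nonneg_right step3 (by positivity)
    _ = (16 ^ ((d:ℝ)/2) * (1 + d.factorial) * δ ^ (-((d:ℝ)-1)/2)) / Real.sqrt w := by ring

lemma core (d : ℕ) (hd : 1 ≤ d) (δ : ℝ) (hδ : 0 < δ) :
    ∃ K : ℝ, 0 < K ∧ ∀ w : ℝ, δ < w →
      IntegrableOn (fun v => v ^ (-(d:ℝ)/2) * Real.exp (-(w*(v-1)^2)/(2*v))) (Ioi 0) ∧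
      ∫ v in Ioi 0, v ^ (-(d:ℝ)/2) * Real.exp (-(w*(v-1)^2)/(2*v)) ≤ K / Real.sqrt w := by
  set K1 : ℝ := 16 ^ ((d:ℝ)/2) * (1 + d.factorial) * δ ^ (-((d:ℝ)-1)/2) with hK1
  have hK1pos : 0 < K1 := by
    have : (0:ℝ) < 1 + d.factorial := by positivity
    positivity
  refine ⟨K1/2 + 2 ^ ((d:ℝ)/2) * (2 * Real.sqrt π) + 8 / Real.sqrt δ, by positivity, ?_⟩
  intro w hw
  have hw0 : (0:ℝ) < w := hδ.trans hw
  have hsw : (0:ℝ) < Real.sqrt w := Real.sqrt_pos.mpr hw0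
  set F : ℝ → ℝ := fun v => v ^ (-(d:ℝ)/2) * Real.exp (-(w*(v-1)^2)/(2*v)) with hF
  have hFmeas : Measurable F := by
    rw [hF]; fun_prop
  have hFnonneg : ∀ v ∈ Ioi (0:ℝ), 0 ≤ F v := fun v hv => by
    have : (0:ℝ) < v := hv
    positivity
  -- piece A
  have hboundA : ∀ v ∈ Ioc (0:ℝ) (1/2), F v ≤ K1 / Real.sqrt w := fun v hv =>
    F_small d hd hδ hw hv.1 hv.2
  have hintA : IntegrableOn F (Ioc (0:ℝ) (1/2)) := by
    apply Integrable.mono' (g := fun _ => K1 / Real.sqrt w)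
        (integrableOn_const measure_Ioc_lt_top.ne)
        (hFmeas.aestronglyMeasurable.restrict)
    rw [ae_restrict_iff' measurableSet_Ioc]
    filter_upwards with v hv
    rw [Real.norm_eq_abs, abs_of_nonneg (hFnonneg v hv.1)]
    exact hboundA v hv
  have hA : ∫ v in Ioc (0:ℝ) (1/2), F v ≤ (K1/2) / Real.sqrt w := by
    calc ∫ v in Ioc (0:ℝ) (1/2), F v ≤ ∫ _ in Ioc (0:ℝ) (1/2), K1 / Real.sqrt w :=
          setIntegral_mono_on hintA (integrableOn_const measure_Ioc_lt_top.ne)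
            measurableSet_Ioc hboundA
      _ = (1/2) * (K1 / Real.sqrt w) := by
          rw [setIntegral_const, Real.volume_real_Ioc_of_le (by norm_num), smul_eq_mul]
          norm_num
      _ = (K1/2) / Real.sqrt w := by ring
  -- piece B
  set gB : ℝ → ℝ := fun v => 2 ^ ((d:ℝ)/2) * Real.exp (-(w/4) * (v-1)^2) with hgB
  have hgBint : Integrable gB := by
    apply Integrable.const_mul
    exact (integrable_exp_neg_mul_sq (by positivity : (0:ℝ) < w/4)).comp_sub_right 1
  have hboundB : ∀ v ∈ Ioc (1/2:ℝ) 2, F v ≤ gB v := by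
    intro v hv
    obtain ⟨hv1, hv2⟩ := hv
    have hv0 : (0:ℝ) < v := by linarith
    have h1 : v ^ (-(d:ℝ)/2) ≤ 2 ^ ((d:ℝ)/2) := by
      rw [neg_div, Real.rpow_neg hv0.le, ← Real.inv_rpow hv0.le]
      exact Real.rpow_le_rpow (by positivity) (by rw [inv_le_comm₀ hv0 (by norm_num)]; linarith)
        (by positivity)
    have h2 : Real.exp (-(w*(v-1)^2)/(2*v)) ≤ Real.exp (-(w/4) * (v-1)^2) := by
      apply Real.exp_le_exp.mpr
      rw [neg_div, neg_mul, neg_le_neg_iff, le_div_iff₀ (by positivity)]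
      nlinarith [mul_nonneg (mul_nonneg hw0.le (sq_nonneg (v-1))) (by linarith : (0:ℝ) ≤ 4 - 2*v)]
    calc F v ≤ 2 ^ ((d:ℝ)/2) * Real.exp (-(w*(v-1)^2)/(2*v)) :=
          mul_le_mul_of_nonneg_right h1 (Real.exp_pos _).le
      _ ≤ gB v := mul_le_mul_of_nonneg_left h2 (by positivity)
  have hintB : IntegrableOn F (Ioc (1/2:ℝ) 2) := by
    apply Integrable.mono' hgBint.integrableOn hFmeas.aestronglyMeasurable.restrict
    rw [ae_restrict_iff' measurableSet_Ioc]
    filter_upwards with v hv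
    rw [Real.norm_eq_abs, abs_of_nonneg (hFnonneg v (by exact lt_trans (by norm_num) hv.1))]
    exact hboundB v hv
  have hB : ∫ v in Ioc (1/2:ℝ) 2, F v ≤ 2 ^ ((d:ℝ)/2) * (2 * Real.sqrt π) / Real.sqrt w := by
    have step1 : ∫ v in Ioc (1/2:ℝ) 2, F v ≤ ∫ v in Ioc (1/2:ℝ) 2, gB v :=
      setIntegral_mono_on hintB hgBint.integrableOn measurableSet_Ioc hboundB
    have step2 : ∫ v in Ioc (1/2:ℝ) 2, gB v ≤ ∫ v, gB v :=
      setIntegral_le_integral hgBint (Filter.Eventually.of_forall fun v => by positivity)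
    have step3 : ∫ v, gB v = 2 ^ ((d:ℝ)/2) * Real.sqrt (π / (w/4)) := by
      rw [hgB, MeasureTheory.integral_const_mul]
      congr 1
      rw [show (fun v : ℝ => Real.exp (-(w/4) * (v-1)^2)) = fun v : ℝ => (fun x => Real.exp (-(w/4) * x^2)) (v - 1) from rfl]
      rw [integral_sub_right_eq_self (fun x => Real.exp (-(w/4) * x^2)) 1]
      exact integral_gaussian (w/4)
    have step4 : Real.sqrt (π / (w/4)) = 2 * Real.sqrt π / Real.sqrt w := by
      rw [show π / (w/4) = 4 * π / w by ring, Real.sqrt_div (by positivity) w,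
        Real.sqrt_mul (by norm_num) π, show Real.sqrt 4 = 2 by
          rw [show (4:ℝ) = 2^2 by norm_num, Real.sqrt_sq (by norm_num)]]
    calc ∫ v in Ioc (1/2:ℝ) 2, F v ≤ ∫ v, gB v := step1.trans step2
      _ = 2 ^ ((d:ℝ)/2) * (2 * Real.sqrt π / Real.sqrt w) := by rw [step3, step4]
      _ = 2 ^ ((d:ℝ)/2) * (2 * Real.sqrt π) / Real.sqrt w := by ring
  -- piece C
  set gC : ℝ → ℝ := fun v => Real.exp (-(w/8) * v) with hgC
  have hgCint : IntegrableOn gC (Ioi 2) := exp_neg_integrableOn_Ioi 2 (by positivity)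
  have hboundC : ∀ v ∈ Ioi (2:ℝ), F v ≤ gC v := by
    intro v hv
    have hv2 : (2:ℝ) < v := hv
    have hv0 : (0:ℝ) < v := by linarith
    have h1 : v ^ (-(d:ℝ)/2) ≤ 1 := by
      apply Real.rpow_le_one_of_one_le_of_nonpos (by linarith)
      have : (0:ℝ) ≤ d := Nat.cast_nonneg d
      rw [neg_div]; linarith [div_nonneg this (by norm_num : (0:ℝ) ≤ 2)]
    have h2 : Real.exp (-(w*(v-1)^2)/(2*v)) ≤ Real.exp (-(w/8) * v) := by
      apply Real.exp_le_exp.mpr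
      rw [neg_div, neg_mul, neg_le_neg_iff]
      rw [le_div_iff₀ (by positivity : (0:ℝ) < 2*v)]
      nlinarith [mul_nonneg hw0.le (sq_nonneg (v-2)), mul_pos hw0 hv0, hw0.le]
    calc F v ≤ 1 * Real.exp (-(w*(v-1)^2)/(2*v)) :=
          mul_le_mul_of_nonneg_right h1 (Real.exp_pos _).le
      _ ≤ gC v := by rw [one_mul]; exact h2
  have hintC : IntegrableOn F (Ioi (2:ℝ)) := by
    apply Integrable.mono' hgCint hFmeas.aestronglyMeasurable.restrict
    rw [ae_restrict_iff' measurableSet_Ioi]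
    filter_upwards with v hv
    rw [Real.norm_eq_abs, abs_of_nonneg (hFnonneg v (by exact lt_trans (by norm_num : (0:ℝ) < 2) hv))]
    exact hboundC v hv
  have hC : ∫ v in Ioi (2:ℝ), F v ≤ (8 / Real.sqrt δ) / Real.sqrt w := by
    have step1 : ∫ v in Ioi (2:ℝ), F v ≤ ∫ v in Ioi (2:ℝ), gC v :=
      setIntegral_mono_on hintC hgCint measurableSet_Ioi hboundC
    have step2 : ∫ v in Ioi (2:ℝ), gC v = (w/8)⁻¹ * Real.exp (-(w/8*2)) := by
      rw [hgC]
      have : (fun v : ℝ => Real.exp (-(w/8) * v)) = fun v : ℝ => (fun x => Real.exp (-x)) (w/8 * v) := by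
        funext v; rw [neg_mul]
      rw [this, integral_comp_mul_left_Ioi (fun x => Real.exp (-x)) 2 (by positivity : (0:ℝ) < w/8),
        integral_exp_neg_Ioi, smul_eq_mul]
    have step3 : (w/8)⁻¹ * Real.exp (-(w/8*2)) ≤ 8 / w := by
      have h : Real.exp (-(w/8*2)) ≤ 1 := Real.exp_le_one_iff.mpr (by nlinarith)
      have h2 : (w/8)⁻¹ = 8 / w := by field_simp
      nlinarith [inv_pos.mpr (by positivity : (0:ℝ) < w/8), Real.exp_pos (-(w/8*2))]
    have step4 : 8 / w ≤ (8 / Real.sqrt δ) / Real.sqrt w := by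
      rw [div_div]
      have h : Real.sqrt δ * Real.sqrt w ≤ w := by
        calc Real.sqrt δ * Real.sqrt w ≤ Real.sqrt w * Real.sqrt w :=
              mul_le_mul_of_nonneg_right (Real.sqrt_le_sqrt hw.le) hsw.le
          _ = w := Real.mul_self_sqrt hw0.le
      exact div_le_div_of_nonneg_left (by norm_num) (by positivity) h
    calc ∫ v in Ioi (2:ℝ), F v ≤ (w/8)⁻¹ * Real.exp (-(w/8*2)) := step1.trans_eq step2 -- fix
      _ ≤ 8 / w := step3
      _ ≤ _ := step4
  -- assemble
  have hdisj1 : Disjoint (Ioc (0:ℝ) (1/2)) (Ioc (1/2:ℝ) 2) := Ioc_disjoint_Ioc_of_le le_rfl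
  have hdisj2 : Disjoint (Ioc (0:ℝ) 2) (Ioi (2:ℝ)) := Ioc_disjoint_Ioi_same
  have hu1 : Ioc (0:ℝ) (1/2) ∪ Ioc (1/2:ℝ) 2 = Ioc (0:ℝ) 2 := Ioc_union_Ioc_eq_Ioc (by norm_num) (by norm_num)
  have hu2 : Ioc (0:ℝ) 2 ∪ Ioi (2:ℝ) = Ioi (0:ℝ) := Ioc_union_Ioi_eq_Ioi (by norm_num)
  have hint2 : IntegrableOn F (Ioc (0:ℝ) 2) := by rw [← hu1]; exact hintA.union hintB
  have hint : IntegrableOn F (Ioi (0:ℝ)) := by rw [← hu2]; exact hint2.union hintC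
  refine ⟨hint, ?_⟩
  have e1 : ∫ v in Ioi (0:ℝ), F v = (∫ v in Ioc (0:ℝ) 2, F v) + ∫ v in Ioi (2:ℝ), F v := by
    rw [← hu2, setIntegral_union hdisj2 measurableSet_Ioi hint2 hintC]
  have e2 : ∫ v in Ioc (0:ℝ) 2, F v = (∫ v in Ioc (0:ℝ) (1/2), F v) + ∫ v in Ioc (1/2:ℝ) 2, F v := by
    rw [← hu1, setIntegral_union hdisj1 measurableSet_Ioc hintA hintB]
  rw [e1, e2]
  have : (K1/2 + 2 ^ ((d:ℝ)/2) * (2 * Real.sqrt π) + 8 / Real.sqrt δ) / Real.sqrt w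
      = (K1/2)/Real.sqrt w + 2 ^ ((d:ℝ)/2) * (2 * Real.sqrt π)/Real.sqrt w + (8/Real.sqrt δ)/Real.sqrt w := by
    field_simp
  rw [this]
  exact add_le_add (add_le_add hA hB) hC

lemma pointwise_bound (d : ℕ) {x z t θ s : ℝ} (hx : 0 < x) (hz : 0 < z) (ht : 0 < t)
    (hθ : 0 < θ) (hs1 : θ*t < s) (hs2 : s < t) :
    heatKernel d s x * heatKernel d (t-s) z ≤
      (2*π*(θ*t)) ^ (-(d:ℝ)/2) * ((2*π) ^ (-(d:ℝ)/2) *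
        (Real.exp (-(x+z)^2/(2*t)) *
          ((t-s) ^ (-(d:ℝ)/2) * Real.exp (-((x+z)*(t-s)-z*t)^2 / (2*(t^2*(t-s))))))) := by
  have hθt : 0 < θ * t := by positivity
  have hs0 : 0 < s := hθt.trans hs1
  have hts : 0 < t - s := by linarith
  have hpi := Real.pi_pos
  -- split (2π(t-s))^e
  have hb : (2*π*(t-s)) ^ (-(d:ℝ)/2) = (2*π) ^ (-(d:ℝ)/2) * (t-s) ^ (-(d:ℝ)/2) :=
    Real.mul_rpow (by positivity) hts.le
  -- monotonicity in s for first factor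
  have ha : (2*π*s) ^ (-(d:ℝ)/2) ≤ (2*π*(θ*t)) ^ (-(d:ℝ)/2) := by
    apply Real.rpow_le_rpow_of_nonpos (by positivity) (by nlinarith)
    have : (0:ℝ) ≤ (d:ℝ) := Nat.cast_nonneg d
    rw [neg_div]; linarith [div_nonneg this (by norm_num : (0:ℝ) ≤ 2)]
  -- exponent identity
  have hid : x^2/(2*s) + z^2/(2*(t-s)) =
      (x+z)^2/(2*t) + ((x+z)*(t-s)-z*t)^2/(2*(s*(t-s)*t)) := by
    field_simp
    ring
  have hBle : ((x+z)*(t-s)-z*t)^2/(2*(t^2*(t-s))) ≤ ((x+z)*(t-s)-z*t)^2/(2*(s*(t-s)*t)) := by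
    apply div_le_div_of_nonneg_left (sq_nonneg _) (by positivity)
    nlinarith [mul_le_mul_of_nonneg_right hs2.le (mul_nonneg hts.le ht.le)]
  have hexp : Real.exp (-x^2/(2*s)) * Real.exp (-z^2/(2*(t-s))) ≤
      Real.exp (-(x+z)^2/(2*t)) * Real.exp (-((x+z)*(t-s)-z*t)^2 / (2*(t^2*(t-s)))) := by
    rw [← Real.exp_add, ← Real.exp_add]
    apply Real.exp_le_exp.mpr
    simp only [neg_div]
    linarith [hid, hBle]
  have hexp0 : (0:ℝ) ≤ Real.exp (-x^2/(2*s)) * Real.exp (-z^2/(2*(t-s))) := by positivity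
  unfold heatKernel
  calc (2*π*s) ^ (-(d:ℝ)/2) * Real.exp (-x^2/(2*s)) *
        ((2*π*(t-s)) ^ (-(d:ℝ)/2) * Real.exp (-z^2/(2*(t-s))))
      = ((2*π*s) ^ (-(d:ℝ)/2) * ((2*π) ^ (-(d:ℝ)/2) * (t-s) ^ (-(d:ℝ)/2))) *
        (Real.exp (-x^2/(2*s)) * Real.exp (-z^2/(2*(t-s)))) := by rw [hb]; ring
    _ ≤ ((2*π*(θ*t)) ^ (-(d:ℝ)/2) * ((2*π) ^ (-(d:ℝ)/2) * (t-s) ^ (-(d:ℝ)/2))) *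
        (Real.exp (-(x+z)^2/(2*t)) * Real.exp (-((x+z)*(t-s)-z*t)^2 / (2*(t^2*(t-s))))) := by
        apply mul_le_mul
        · exact mul_le_mul_of_nonneg_right ha (by positivity)
        · exact hexp
        · exact hexp0
        · positivity
    _ = _ := by ring

theorem stmt2 (d : ℕ) (hd : 1 ≤ d) (δ : ℝ) (hδ : 0 < δ) :
    ∃ C : ℝ, 0 < C ∧ ∀ x z t θ : ℝ, 0 < x → 0 < z → 0 < t → (x + z) * z > δ * t →
      0 < θ → θ < 1 →
      θ ^ ((d : ℝ) / 2) * ∫ s in (θ * t)..t, heatKernel d s x * heatKernel d (t - s) z ≤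
        C * heatKernel d t (x + z) * ((x + z) / (t * z)) ^ ((d : ℝ) / 2 - 1) *
          Real.sqrt (t / ((x + z) * z)) := by
  obtain ⟨K, hK, hcore⟩ := core d hd δ hδ
  have hpi := Real.pi_pos
  refine ⟨K * (2*π) ^ (-(d:ℝ)/2), by positivity, ?_⟩
  intro x z t θ hx hz ht hδt hθ hθ1
  have hxz : 0 < x + z := by linarith
  set w : ℝ := (x+z)*z/t with hw_def
  have hw : δ < w := by rw [hw_def, lt_div_iff₀ ht]; linarith
  have hw0 : 0 < w := hδ.trans hw
  have hsw : 0 < Real.sqrt w := Real.sqrt_pos.mpr hw0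
  set c : ℝ := z*t/(x+z) with hc_def
  have hc : 0 < c := by positivity
  obtain ⟨hFint, hFbound⟩ := hcore w hw
  set H : ℝ → ℝ := fun u => u ^ (-(d:ℝ)/2) * Real.exp (-((x+z)*u-z*t)^2 / (2*(t^2*u))) with hH_def
  -- scaling identity
  have hHc : ∀ v ∈ Ioi (0:ℝ), H (c*v) =
      c ^ (-(d:ℝ)/2) * (v ^ (-(d:ℝ)/2) * Real.exp (-(w*(v-1)^2)/(2*v))) := by
    intro v hv
    have hv0 : (0:ℝ) < v := hv
    rw [hH_def]
    simp only
    rw [Real.mul_rpow hc.le hv0.le]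
    have hexp : -((x+z)*(c*v)-z*t)^2 / (2*(t^2*(c*v))) = -(w*(v-1)^2)/(2*v) := by
      rw [hw_def, hc_def]
      field_simp
    rw [hexp]; ring
  -- integrability of H on Ioi 0
  have hHmeas : Measurable H := by rw [hH_def]; fun_prop
  have hHcInt : IntegrableOn (fun v => H (c*v)) (Ioi (0:ℝ)) := by
    have h1 : IntegrableOn (fun v => c ^ (-(d:ℝ)/2) * (v ^ (-(d:ℝ)/2) * Real.exp (-(w*(v-1)^2)/(2*v)))) (Ioi (0:ℝ)) :=
      hFint.const_mul (c ^ (-(d:ℝ)/2))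
    exact h1.congr_fun (fun v hv => (hHc v hv).symm) measurableSet_Ioi
  have hHint : IntegrableOn H (Ioi (0:ℝ)) := by
    have := (integrableOn_Ioi_comp_mul_left_iff H 0 hc).mp hHcInt
    rwa [mul_zero] at this
  have hHnonneg : ∀ u ∈ Ioi (0:ℝ), 0 ≤ H u := by
    intro u hu
    have : (0:ℝ) < u := hu
    rw [hH_def]; positivity
  -- value of the full integral
  have hHval : ∫ u in Ioi (0:ℝ), H u ≤ (c * c ^ (-(d:ℝ)/2)) * (K / Real.sqrt w) := by
    have e1 : ∫ v in Ioi (0:ℝ), H (c*v) = c⁻¹ * ∫ u in Ioi (0:ℝ), H u := by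
      have := integral_comp_mul_left_Ioi H 0 hc
      rwa [mul_zero, smul_eq_mul] at this
    have e2 : ∫ v in Ioi (0:ℝ), H (c*v)
        = c ^ (-(d:ℝ)/2) * ∫ v in Ioi (0:ℝ), v ^ (-(d:ℝ)/2) * Real.exp (-(w*(v-1)^2)/(2*v)) := by
      rw [← MeasureTheory.integral_const_mul]
      exact MeasureTheory.setIntegral_congr_fun measurableSet_Ioi hHc
    have e3 : ∫ u in Ioi (0:ℝ), H u = c * (c ^ (-(d:ℝ)/2) *
        ∫ v in Ioi (0:ℝ), v ^ (-(d:ℝ)/2) * Real.exp (-(w*(v-1)^2)/(2*v))) := by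
      rw [← e2, e1]
      field_simp
    rw [e3, mul_assoc]
    apply mul_le_mul_of_nonneg_left _ hc.le
    exact mul_le_mul_of_nonneg_left hFbound (Real.rpow_pos_of_pos hc _).le
  -- interval integral manipulation
  have hθt : 0 < θ * t := by positivity
  have hθtt : θ * t < t := by nlinarith
  set G : ℝ → ℝ := fun s => (2*π*(θ*t)) ^ (-(d:ℝ)/2) * ((2*π) ^ (-(d:ℝ)/2) *
      (Real.exp (-(x+z)^2/(2*t)) * H (t-s))) with hG_def
  -- integrability of G on Ioo
  have hHsubInt : IntegrableOn H (Ioc (0:ℝ) (t - θ*t)) :=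
    hHint.mono_set (Ioc_subset_Ioi_self)
  have hIIH : IntervalIntegrable H volume 0 (t - θ*t) := by
    rw [intervalIntegrable_iff_integrableOn_Ioc_of_le (by linarith)]
    exact hHsubInt
  have hIIHc : IntervalIntegrable (fun s => H (t - s)) volume (θ*t) t := by
    have h0 := (hIIH.comp_sub_left t).symm
    simpa using h0
  have hGint : IntegrableOn G (Ioo (θ*t) t) := by
    have h1 : IntegrableOn (fun s => H (t - s)) (Ioo (θ*t) t) := by
      have h2 : IntegrableOn (fun s => H (t - s)) (Ioc (θ*t) t) := by
        rw [intervalIntegrable_iff_integrableOn_Ioc_of_le hθtt.le] at hIIHc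
        exact hIIHc
      exact h2.mono_set Ioo_subset_Ioc_self
    rw [hG_def]
    exact ((h1.const_mul (Real.exp (-(x+z)^2/(2*t)))).const_mul
      ((2*π) ^ (-(d:ℝ)/2))).const_mul ((2*π*(θ*t)) ^ (-(d:ℝ)/2))
  have hf0 : ∀ s ∈ Ioo (θ*t) t, 0 ≤ heatKernel d s x * heatKernel d (t - s) z := by
    intro s hs
    have hs0 : 0 < s := hθt.trans hs.1
    have hts : 0 < t - s := by linarith [hs.2]
    unfold heatKernel
    positivity
  -- main integral bound
  have hmono : ∫ s in Ioo (θ*t) t, heatKernel d s x * heatKernel d (t - s) z ≤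
      ∫ s in Ioo (θ*t) t, G s := by
    apply integral_mono_of_nonneg
    · filter_upwards [ae_restrict_mem measurableSet_Ioo] with s hs
      exact hf0 s hs
    · exact hGint
    · filter_upwards [ae_restrict_mem measurableSet_Ioo] with s hs
      exact pointwise_bound d hx hz ht hθ hs.1 hs.2
  -- compute/bound ∫ G
  have hGval : ∫ s in Ioo (θ*t) t, G s ≤ (2*π*(θ*t)) ^ (-(d:ℝ)/2) * ((2*π) ^ (-(d:ℝ)/2) *
      (Real.exp (-(x+z)^2/(2*t)) * ((c * c ^ (-(d:ℝ)/2)) * (K / Real.sqrt w)))) := by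
    have e0 : ∫ s in Ioo (θ*t) t, G s = (2*π*(θ*t)) ^ (-(d:ℝ)/2) * ((2*π) ^ (-(d:ℝ)/2) *
        (Real.exp (-(x+z)^2/(2*t)) * ∫ s in Ioo (θ*t) t, H (t-s))) := by
      rw [hG_def]
      simp only [MeasureTheory.integral_const_mul]
    rw [e0]
    have e1 : ∫ s in Ioo (θ*t) t, H (t-s) ≤ ∫ u in Ioi (0:ℝ), H u := by
      have i1 : ∫ s in Ioo (θ*t) t, H (t-s) = ∫ s in (θ*t)..t, H (t-s) := by
        rw [intervalIntegral.integral_of_le hθtt.le, MeasureTheory.integral_Ioc_eq_integral_Ioo]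
      have i2 : ∫ s in (θ*t)..t, H (t-s) = ∫ u in (0:ℝ)..(t - θ*t), H u := by
        rw [intervalIntegral.integral_comp_sub_left H t]
        norm_num
      have i3 : ∫ u in (0:ℝ)..(t - θ*t), H u = ∫ u in Ioc (0:ℝ) (t - θ*t), H u := by
        rw [intervalIntegral.integral_of_le (by linarith)]
      rw [i1, i2, i3]
      apply MeasureTheory.setIntegral_mono_set hHint
      · filter_upwards [ae_restrict_mem measurableSet_Ioi] with u hu
        exact hHnonneg u hu
      · exact HasSubset.Subset.eventuallyLE Ioc_subset_Ioi_self
    have hP1 : (0:ℝ) ≤ (2*π*(θ*t)) ^ (-(d:ℝ)/2) := (Real.rpow_pos_of_pos (by positivity) _).le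
    have hP2 : (0:ℝ) ≤ (2*π) ^ (-(d:ℝ)/2) := (Real.rpow_pos_of_pos (by positivity) _).le
    apply mul_le_mul_of_nonneg_left _ hP1
    apply mul_le_mul_of_nonneg_left _ hP2
    apply mul_le_mul_of_nonneg_left _ (Real.exp_pos _).le
    exact e1.trans hHval
  -- put together
  have hIoo : ∫ s in (θ*t)..t, heatKernel d s x * heatKernel d (t - s) z
      = ∫ s in Ioo (θ*t) t, heatKernel d s x * heatKernel d (t - s) z := by
    rw [intervalIntegral.integral_of_le hθtt.le, MeasureTheory.integral_Ioc_eq_integral_Ioo]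
  have hθpow : (0:ℝ) < θ ^ ((d:ℝ)/2) := Real.rpow_pos_of_pos hθ _
  have key : θ ^ ((d:ℝ)/2) * ∫ s in (θ*t)..t, heatKernel d s x * heatKernel d (t - s) z ≤
      θ ^ ((d:ℝ)/2) * ((2*π*(θ*t)) ^ (-(d:ℝ)/2) * ((2*π) ^ (-(d:ℝ)/2) *
      (Real.exp (-(x+z)^2/(2*t)) * ((c * c ^ (-(d:ℝ)/2)) * (K / Real.sqrt w))))) := by
    rw [hIoo]
    exact mul_le_mul_of_nonneg_left (hmono.trans hGval) hθpow.le
  -- simplify θ^{d/2} (2πθt)^{-d/2} = (2πt)^{-d/2}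
  have hcollapse : θ ^ ((d:ℝ)/2) * (2*π*(θ*t)) ^ (-(d:ℝ)/2) = (2*π*t) ^ (-(d:ℝ)/2) := by
    have : (2*π*(θ*t)) = θ * (2*π*t) := by ring
    rw [this, Real.mul_rpow hθ.le (by positivity), ← mul_assoc,
      ← Real.rpow_add hθ,
      show ((d:ℝ)/2 + -(d:ℝ)/2 : ℝ) = 0 by ring, Real.rpow_zero, one_mul]
  -- identify RHS pieces
  have hrw1 : ((x + z) / (t * z)) ^ ((d:ℝ)/2 - 1) = c * c ^ (-(d:ℝ)/2) := by
    have h1 : (x + z) / (t * z) = c⁻¹ := by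
      rw [hc_def, inv_div, mul_comm t z]
    rw [h1, Real.inv_rpow hc.le, ← Real.rpow_neg hc.le]
    have h2 : -((d:ℝ)/2 - 1) = 1 + (-(d:ℝ)/2) := by ring
    rw [h2, Real.rpow_add hc, Real.rpow_one]
  have hrw2 : Real.sqrt (t / ((x + z) * z)) = 1 / Real.sqrt w := by
    have h1 : t / ((x + z) * z) = w⁻¹ := by
      rw [hw_def]; field_simp
    rw [h1, Real.sqrt_inv, one_div]
  calc θ ^ ((d:ℝ)/2) * ∫ s in (θ*t)..t, heatKernel d s x * heatKernel d (t - s) z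
      ≤ θ ^ ((d:ℝ)/2) * ((2*π*(θ*t)) ^ (-(d:ℝ)/2) * ((2*π) ^ (-(d:ℝ)/2) *
        (Real.exp (-(x+z)^2/(2*t)) * ((c * c ^ (-(d:ℝ)/2)) * (K / Real.sqrt w))))) := key
    _ = (K * (2*π) ^ (-(d:ℝ)/2)) * ((2*π*t) ^ (-(d:ℝ)/2) * Real.exp (-(x+z)^2/(2*t))) *
        (c * c ^ (-(d:ℝ)/2)) * (1 / Real.sqrt w) := by
        rw [← mul_assoc, hcollapse]
        ring
    _ = K * (2*π) ^ (-(d:ℝ)/2) * heatKernel d t (x + z) *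
        ((x + z) / (t * z)) ^ ((d:ℝ)/2 - 1) * Real.sqrt (t / ((x + z) * z)) := by
        rw [hrw1, hrw2]
        unfold heatKernel
        ring
end

section
/- Let d ≥ 1 and p_t^{(d)}(x) = (2πt)^{−d/2} e^{−x²/(2t)}. For any δ > 0 there is a constant C_δ such that if (x+z)z > δt > 0 and 0 < z ≤ x, then ∫₀^t p_s^{(d)}(x) p_{t−s}^{(d)}(z) ds ≤ C_δ · p_t^{(d)}(x+z) · ((x+z)/(tz))^{d/2−1} · √(t/((x+z)z)). -/
open Real intervalIntegral
open MeasureTheory Set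

set_option maxHeartbeats 2000000

lemma w_half (d : ℕ) {w : ℝ} (hw : 0 ≤ w) :
    w ^ ((d:ℝ)/2) * Real.exp (-w) ≤ (d:ℝ)^d + 1 := by
  rcases Nat.eq_zero_or_pos d with hd | hd
  · subst hd
    simp only [Nat.cast_zero, zero_div, Real.rpow_zero, one_mul, pow_zero]
    calc Real.exp (-w) ≤ 1 := Real.exp_le_one_iff.mpr (by linarith)
      _ ≤ _ := by norm_num
  have hd' : (0:ℝ) < d := by exact_mod_cast hd
  have h3 : (1:ℝ) ≤ (d:ℝ)^d := one_le_pow₀ (by exact_mod_cast hd)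
  rcases le_total w 1 with h | h
  · have h1 : w ^ ((d:ℝ)/2) ≤ 1 := Real.rpow_le_one hw h (by positivity)
    have h2 : Real.exp (-w) ≤ 1 := Real.exp_le_one_iff.mpr (by linarith)
    nlinarith [Real.exp_pos (-w), Real.rpow_nonneg hw ((d:ℝ)/2)]
  · have h1 : w ^ ((d:ℝ)/2) ≤ w ^ ((d:ℝ)) := Real.rpow_le_rpow_of_exponent_le h (by linarith)
    have h2 : w ^ ((d:ℝ)) = w ^ d := Real.rpow_natCast w d
    have h4 : w ^ d ≤ (d:ℝ)^d * Real.exp w := by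
      have hq : w / d ≤ Real.exp (w / d) := by
        have := Real.add_one_le_exp (w/d); linarith
      have hq2 : (w/d)^d ≤ (Real.exp (w/d))^d :=
        pow_le_pow_left₀ (by positivity) hq d
      have hq3 : (Real.exp (w/d))^d = Real.exp w := by
        rw [← Real.exp_nat_mul]; congr 1; field_simp
      have hq4 : (w/d)^d = w^d / (d:ℝ)^d := div_pow w _ d
      rw [hq4, hq3] at hq2
      rw [div_le_iff₀ (by positivity)] at hq2
      linarith [hq2]
    have hexp := Real.exp_pos (-w)
    have h5 : w ^ ((d:ℝ)/2) * Real.exp (-w) ≤ w ^ d * Real.exp (-w) := by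
      have := h1.trans_eq h2
      nlinarith
    calc w ^ ((d:ℝ)/2) * Real.exp (-w) ≤ w ^ d * Real.exp (-w) := h5
      _ ≤ ((d:ℝ)^d * Real.exp w) * Real.exp (-w) := by nlinarith
      _ = (d:ℝ)^d := by rw [mul_assoc, ← Real.exp_add]; simp
      _ ≤ _ := by norm_num

lemma sup_bound (d : ℕ) {s q : ℝ} (hs : 0 < s) (hq : 0 < q) :
    s ^ (-(d:ℝ)/2) * Real.exp (-(q/s)) ≤ ((d:ℝ)^d + 1) * q ^ (-(d:ℝ)/2) := by
  have e2 : -(d:ℝ)/2 = -((d:ℝ)/2) := neg_div 2 (d:ℝ)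
  rw [e2]
  have h1 := w_half d (le_of_lt (div_pos hq hs))
  have h2 : (q/s) ^ ((d:ℝ)/2) = q ^ ((d:ℝ)/2) * s ^ (-((d:ℝ)/2)) := by
    rw [Real.div_rpow hq.le hs.le, Real.rpow_neg hs.le, div_eq_mul_inv]
  rw [h2] at h1
  have hq2 : (0:ℝ) < q ^ (-((d:ℝ)/2)) := Real.rpow_pos_of_pos hq _
  have key : q ^ ((d:ℝ)/2) * q ^ (-((d:ℝ)/2)) = 1 := by
    rw [← Real.rpow_add hq]; simp
  have h6 := mul_le_mul_of_nonneg_right h1 hq2.le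
  have h7 : s ^ (-((d:ℝ)/2)) * Real.exp (-(q/s))
      = q ^ ((d:ℝ)/2) * s ^ (-((d:ℝ)/2)) * Real.exp (-(q/s)) * q ^ (-((d:ℝ)/2)) := by
    linear_combination (-(s ^ (-((d:ℝ)/2)) * Real.exp (-(q/s)))) * key
  rw [h7]; exact h6

lemma rpow_anti {A B p : ℝ} (hB : 0 < B) (hBA : B ≤ A) (hp : 0 ≤ p) : A ^ (-p) ≤ B ^ (-p) := by
  have h1 : (0:ℝ) < B ^ p := Real.rpow_pos_of_pos hB p
  have h2 : B ^ p ≤ A ^ p := Real.rpow_le_rpow hB.le hBA hp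
  rw [Real.rpow_neg (hB.trans_le hBA).le, Real.rpow_neg hB.le]
  exact inv_anti₀ h1 h2

lemma rpow_anti' (d : ℕ) {A B : ℝ} (hB : 0 < B) (hBA : B ≤ A) : A ^ (-(d:ℝ)/2) ≤ B ^ (-(d:ℝ)/2) := by
  have e2 : -(d:ℝ)/2 = -((d:ℝ)/2) := neg_div 2 (d:ℝ)
  rw [e2]
  exact rpow_anti hB hBA (by positivity)

lemma hk_zero (d : ℕ) (hd : 1 ≤ d) (y : ℝ) : heatKernel d 0 y = 0 := by
  have h : -(d:ℝ)/2 ≠ 0 := by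
    have : (1:ℝ) ≤ d := by exact_mod_cast hd
    intro h; rw [div_eq_zero_iff] at h
    rcases h with h | h
    · linarith [neg_eq_zero.mp h]
    · norm_num at h
  simp [heatKernel, Real.zero_rpow h]

lemma hk_nonneg (d : ℕ) {u : ℝ} (hu : 0 ≤ u) (y : ℝ) : 0 ≤ heatKernel d u y := by
  unfold heatKernel
  have : (0:ℝ) ≤ 2 * Real.pi * u := by positivity
  positivity

lemma hk_le_const (d : ℕ) {u y : ℝ} (hu : 0 < u) (hy : 0 < y) :
    heatKernel d u y ≤ ((d:ℝ)^d + 1) * (Real.pi * y^2) ^ (-(d:ℝ)/2) := by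
  unfold heatKernel
  set w : ℝ := y^2/(2*u) with hwdef
  have hw : 0 < w := by positivity
  have hA : (0:ℝ) < Real.pi * y^2 := by positivity
  have hb : 2*Real.pi*u = (Real.pi*y^2)/w := by
    rw [hwdef]; field_simp
  have harg : -y^2/(2*u) = -w := by rw [hwdef]; ring
  rw [hb, harg]
  have hsplit : ((Real.pi*y^2)/w) ^ (-(d:ℝ)/2)
      = (Real.pi*y^2) ^ (-(d:ℝ)/2) * w ^ ((d:ℝ)/2) := by
    rw [Real.div_rpow hA.le hw.le]
    have eneg : (-(d:ℝ)/2) = -((d:ℝ)/2) := by ring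
    rw [eneg, Real.rpow_neg hA.le, Real.rpow_neg hw.le]
    have : (0:ℝ) < w ^ ((d:ℝ)/2) := Real.rpow_pos_of_pos hw _
    field_simp
  rw [hsplit, mul_assoc]
  rw [mul_comm (((d:ℝ)^d + 1)) _]
  apply mul_le_mul_of_nonneg_left (w_half d hw.le) (Real.rpow_nonneg hA.le _)

lemma f_meas (d : ℕ) (x z t : ℝ) :
    Measurable (fun s => heatKernel d s x * heatKernel d (t - s) z) := by
  unfold heatKernel
  fun_prop

lemma hk_prod (d : ℕ) {x z s t : ℝ} (hs : 0 < s) (hst : s < t) :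
    heatKernel d s x * heatKernel d (t - s) z
      = (2*Real.pi)^(-(d:ℝ)) * Real.exp (-(x+z)^2/(2*t)) *
        ((s*(t-s)) ^ (-(d:ℝ)/2)
          * Real.exp (-((x*t-(x+z)*s)^2/(2*(s*(t-s))*t)))) := by
  unfold heatKernel
  have hts : 0 < t - s := by linarith
  have ht : 0 < t := hs.trans hst
  have h2π : (0:ℝ) < 2*Real.pi := by positivity
  have hb1 : (0:ℝ) ≤ 2*Real.pi*s := by positivity
  have hb2 : (0:ℝ) ≤ 2*Real.pi*(t-s) := by positivity
  have hpow : (2*Real.pi*s) ^ (-(d:ℝ)/2) * (2*Real.pi*(t-s)) ^ (-(d:ℝ)/2)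
      = (2*Real.pi)^(-(d:ℝ)) * (s*(t-s)) ^ (-(d:ℝ)/2) := by
    rw [← Real.mul_rpow hb1 hb2]
    have e1 : 2*Real.pi*s * (2*Real.pi*(t-s)) = (2*Real.pi)^(2:ℕ) * (s*(t-s)) := by ring
    rw [e1, Real.mul_rpow (by positivity) (by positivity)]
    congr 1
    rw [← Real.rpow_natCast (2*Real.pi) 2, ← Real.rpow_mul h2π.le]
    congr 1
    push_cast; ring
  have hexp : Real.exp (-x^2/(2*s)) * Real.exp (-z^2/(2*(t-s)))
      = Real.exp (-(x+z)^2/(2*t)) * Real.exp (-((x*t-(x+z)*s)^2/(2*(s*(t-s))*t))) := by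
    rw [← Real.exp_add, ← Real.exp_add]
    congr 1
    field_simp
    ring
  calc (2*Real.pi*s) ^ (-(d:ℝ)/2) * Real.exp (-x^2/(2*s)) *
        ((2*Real.pi*(t-s)) ^ (-(d:ℝ)/2) * Real.exp (-z^2/(2*(t-s))))
      = ((2*Real.pi*s) ^ (-(d:ℝ)/2) * (2*Real.pi*(t-s)) ^ (-(d:ℝ)/2)) *
        (Real.exp (-x^2/(2*s)) * Real.exp (-z^2/(2*(t-s)))) := by ring
    _ = _ := by rw [hpow, hexp]; ring

lemma gauss_int_le {c r : ℝ} (p q : ℝ) (hc : 0 < c) :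
    ∫ s in p..q, Real.exp (-(c*(s - r)^2)) ≤ Real.sqrt (Real.pi/c) := by
  have hint : Integrable (fun s : ℝ => Real.exp (-(c*(s - r)^2))) := by
    have h0 : Integrable (fun s : ℝ => Real.exp (-c*s^2)) := integrable_exp_neg_mul_sq hc
    have := h0.comp_sub_right r
    simpa [neg_mul] using this
  have hval : (∫ s : ℝ, Real.exp (-(c*(s - r)^2))) = Real.sqrt (Real.pi/c) := by
    have := MeasureTheory.integral_sub_right_eq_self (μ := volume) (fun s : ℝ => Real.exp (-(c*s^2))) r
    rw [this]
    simpa [neg_mul] using integral_gaussian c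
  rcases le_total p q with h | h
  · rw [intervalIntegral.integral_of_le h]
    calc ∫ s in Ioc p q, Real.exp (-(c*(s - r)^2))
        ≤ ∫ s : ℝ, Real.exp (-(c*(s - r)^2)) := by
          apply setIntegral_le_integral hint
          filter_upwards with s using (Real.exp_pos _).le
      _ = _ := hval
  · rw [intervalIntegral.integral_of_ge h]
    have h2 : 0 ≤ ∫ s in Ioc q p, Real.exp (-(c*(s - r)^2)) := by
      apply setIntegral_nonneg measurableSet_Ioc
      intro s _; exact (Real.exp_pos _).le
    have h3 : (0:ℝ) ≤ Real.sqrt (Real.pi/c) := Real.sqrt_nonneg _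
    linarith

lemma exp_int_le {c t p q : ℝ} (hc : 0 < c) (hpq : p ≤ q) :
    ∫ s in p..q, Real.exp (-(c*(t - s))) ≤ Real.exp (-(c*(t-q))) / c := by
  have hderiv : ∀ s ∈ Set.uIcc p q,
      HasDerivAt (fun u : ℝ => Real.exp (-(c*(t - u))) / c) (Real.exp (-(c*(t - s)))) s := by
    intro s _
    have h1 : HasDerivAt (fun u : ℝ => -(c*(t - u))) c s := by
      have := ((hasDerivAt_id s).const_sub t).const_mul c
      -- (fun u => c * (t - u)) deriv = -c
      have h2 := this.neg
      exact (by simpa using h2 : HasDerivAt (-fun y : ℝ => c*(t - y)) c s)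
    have h3 := (h1.exp).div_const c
    have hc' : c ≠ 0 := ne_of_gt hc
    simpa [mul_comm, mul_div_assoc, hc'] using h3
  have hcont : IntervalIntegrable (fun s => Real.exp (-(c*(t - s)))) volume p q := by
    apply Continuous.intervalIntegrable; fun_prop
  rw [intervalIntegral.integral_eq_sub_of_hasDerivAt hderiv hcont]
  have : 0 < Real.exp (-(c*(t-p))) / c := by positivity
  linarith

lemma pw1 (d : ℕ) (hd : 1 ≤ d) {x z t s : ℝ}
    (hz : 0 < z) (hzx : z ≤ x) (ht : 0 < t) (hs : s ∈ Icc 0 (t/4)) :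
    heatKernel d s x * heatKernel d (t-s) z
      ≤ (2*π)^(-(d:ℝ)) * Real.exp (-(x+z)^2/(2*t)) *
        ((t/2)^(-(d:ℝ)/2) * (((d:ℝ)^d+1) * ((x+z)^2/64)^(-(d:ℝ)/2) *
          Real.exp (-((x+z)^2/(16*t))))) := by
  obtain ⟨hs0, hs4⟩ := hs
  have ha : 0 < x + z := by linarith
  have h2π : (0:ℝ) < 2*π := by positivity
  rcases eq_or_lt_of_le hs0 with h0 | h0
  · rw [← h0, hk_zero d hd x, zero_mul]
    have h1 : (0:ℝ) ≤ (t/2)^(-(d:ℝ)/2) := Real.rpow_nonneg (by positivity) _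
    have h2 : (0:ℝ) ≤ ((x+z)^2/64)^(-(d:ℝ)/2) := Real.rpow_nonneg (by positivity) _
    have h3 : (0:ℝ) ≤ (2*π)^(-(d:ℝ)) := Real.rpow_nonneg (by positivity) _
    positivity
  · have hst : s < t := by linarith
    have hts : 0 < t - s := by linarith
    rw [hk_prod d h0 hst]
    apply mul_le_mul_of_nonneg_left _ (by positivity : (0:ℝ) ≤ (2*π)^(-(d:ℝ)) * Real.exp (-(x+z)^2/(2*t)))
    -- core bound
    have hq : (0:ℝ) < (x+z)^2/64 := by positivity
    -- exponent bound
    have hnum : (x+z)*t/4 ≤ x*t-(x+z)*s := by nlinarith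
    have hnum2 : ((x+z)*t/4)^2 ≤ (x*t-(x+z)*s)^2 := by
      have h2 : (0:ℝ) ≤ (x+z)*t/4 := by positivity
      nlinarith
    have hden : 2*(s*(t-s))*t ≤ 2*(s*t)*t := by nlinarith [mul_nonneg (mul_nonneg h0.le h0.le) ht.le]
    have hQ1 : ((x+z)*t/4)^2/(2*(s*t)*t) ≤ (x*t-(x+z)*s)^2/(2*(s*(t-s))*t) :=
      div_le_div₀ (by positivity) hnum2 (by positivity) hden
    have hQ2 : ((x+z)*t/4)^2/(2*(s*t)*t) = (x+z)^2/(32*s) := by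
      field_simp; ring
    have hQ3 : (x+z)^2/64/s + (x+z)^2/(16*t) ≤ (x+z)^2/(32*s) := by
      have e1 : (x+z)^2/(32*s) = (x+z)^2/64/s + (x+z)^2/64/s := by
        field_simp; ring
      have e2 : (x+z)^2/(16*t) ≤ (x+z)^2/64/s := by
        rw [div_div]
        apply div_le_div_of_nonneg_left (by positivity) (by positivity)
        nlinarith
      linarith
    have hexp : Real.exp (-((x*t-(x+z)*s)^2/(2*(s*(t-s))*t)))
        ≤ Real.exp (-((x+z)^2/64/s)) * Real.exp (-((x+z)^2/(16*t))) := by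
      rw [← Real.exp_add]
      apply Real.exp_le_exp.mpr
      rw [hQ2] at hQ1
      linarith
    have hsplit : (s*(t-s)) ^ (-(d:ℝ)/2) = s ^ (-(d:ℝ)/2) * (t-s) ^ (-(d:ℝ)/2) :=
      Real.mul_rpow h0.le hts.le
    have h20 : (0:ℝ) ≤ s ^ (-(d:ℝ)/2) := Real.rpow_nonneg h0.le _
    have h21 : (0:ℝ) ≤ (t-s) ^ (-(d:ℝ)/2) := Real.rpow_nonneg hts.le _
    calc (s*(t-s)) ^ (-(d:ℝ)/2) * Real.exp (-((x*t-(x+z)*s)^2/(2*(s*(t-s))*t)))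
        ≤ (s*(t-s)) ^ (-(d:ℝ)/2) *
            (Real.exp (-((x+z)^2/64/s)) * Real.exp (-((x+z)^2/(16*t)))) := by
          apply mul_le_mul_of_nonneg_left hexp (Real.rpow_nonneg (by positivity) _)
      _ = (s ^ (-(d:ℝ)/2) * Real.exp (-((x+z)^2/64/s))) * (t-s) ^ (-(d:ℝ)/2)
            * Real.exp (-((x+z)^2/(16*t))) := by rw [hsplit]; ring
      _ ≤ (((d:ℝ)^d+1) * ((x+z)^2/64)^(-(d:ℝ)/2)) * (t/2) ^ (-(d:ℝ)/2)
            * Real.exp (-((x+z)^2/(16*t))) := by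
          apply mul_le_mul_of_nonneg_right _ (Real.exp_pos _).le
          apply mul_le_mul (sup_bound d h0 hq) (rpow_anti' d (by positivity) (by linarith))
            h21 (by positivity)
      _ = (t/2)^(-(d:ℝ)/2) * (((d:ℝ)^d+1) * ((x+z)^2/64)^(-(d:ℝ)/2) *
            Real.exp (-((x+z)^2/(16*t)))) := by ring

lemma pw2 (d : ℕ) (hd : 1 ≤ d) {x z t s : ℝ}
    (hz : 0 < z) (hzx : z ≤ x) (ht : 0 < t) (hs : s ∈ Icc (t/4) (t/2)) :
    heatKernel d s x * heatKernel d (t-s) z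
      ≤ (2*π)^(-(d:ℝ)) * Real.exp (-(x+z)^2/(2*t)) *
        ((t/4)^(-(d:ℝ)/2) * (t/2)^(-(d:ℝ)/2) *
          Real.exp (-((x+z)^2/t^3 * (s - (t - z*t/(x+z)))^2))) := by
  obtain ⟨hs4, hs2⟩ := hs
  have ha : 0 < x + z := by linarith
  have h0 : 0 < s := by linarith
  have hst : s < t := by linarith
  have hts : 0 < t - s := by linarith
  rw [hk_prod d h0 hst]
  apply mul_le_mul_of_nonneg_left _
    (by positivity : (0:ℝ) ≤ (2*π)^(-(d:ℝ)) * Real.exp (-(x+z)^2/(2*t)))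
  have hnumeq : (x*t-(x+z)*s)^2 = (x+z)^2 * (s - (t - z*t/(x+z)))^2 := by
    have h1 : (x+z) * (s - (t - z*t/(x+z))) = (x+z)*s - x*t := by
      field_simp; ring
    linear_combination (-((x+z) * (s - (t - z*t/(x+z))) + ((x+z)*s - x*t))) * h1
  have hQ : (x+z)^2/t^3 * (s - (t - z*t/(x+z)))^2
      ≤ (x*t-(x+z)*s)^2/(2*(s*(t-s))*t) := by
    rw [hnumeq]
    have hden : 2*(s*(t-s))*t ≤ t^3 := by
      nlinarith [mul_nonneg ht.le (add_nonneg (sq_nonneg (t-s)) (sq_nonneg s))]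
    have e1 : (x+z)^2/t^3 * (s - (t - z*t/(x+z)))^2
        = ((x+z)^2 * (s - (t - z*t/(x+z)))^2)/t^3 := by ring
    rw [e1]
    apply div_le_div_of_nonneg_left (by positivity) (by positivity) hden
  have hsplit : (s*(t-s)) ^ (-(d:ℝ)/2) = s ^ (-(d:ℝ)/2) * (t-s) ^ (-(d:ℝ)/2) :=
    Real.mul_rpow h0.le hts.le
  calc (s*(t-s)) ^ (-(d:ℝ)/2) * Real.exp (-((x*t-(x+z)*s)^2/(2*(s*(t-s))*t)))
      ≤ (s ^ (-(d:ℝ)/2) * (t-s) ^ (-(d:ℝ)/2)) *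
          Real.exp (-((x+z)^2/t^3 * (s - (t - z*t/(x+z)))^2)) := by
        rw [hsplit]
        apply mul_le_mul_of_nonneg_left (Real.exp_le_exp.mpr (by linarith))
          (mul_nonneg (Real.rpow_nonneg h0.le _) (Real.rpow_nonneg hts.le _))
    _ ≤ ((t/4) ^ (-(d:ℝ)/2) * (t/2) ^ (-(d:ℝ)/2)) *
          Real.exp (-((x+z)^2/t^3 * (s - (t - z*t/(x+z)))^2)) := by
        apply mul_le_mul_of_nonneg_right _ (Real.exp_pos _).le
        apply mul_le_mul (rpow_anti' d (by positivity) hs4)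
          (rpow_anti' d (by positivity) (by linarith)) (Real.rpow_nonneg hts.le _)
          (Real.rpow_nonneg (by positivity) _)

lemma pw3 (d : ℕ) (hd : 1 ≤ d) {x z t s : ℝ}
    (hz : 0 < z) (hzx : z ≤ x) (ht : 0 < t)
    (hs : s ∈ Icc (t/2) (t - 2*(z*t/(x+z)))) :
    heatKernel d s x * heatKernel d (t-s) z
      ≤ (2*π)^(-(d:ℝ)) * Real.exp (-(x+z)^2/(2*t)) *
        ((t/2)^(-(d:ℝ)/2) * (2*(z*t/(x+z)))^(-(d:ℝ)/2) *
          Real.exp (-((x+z)^2/(8*t^2) * (t - s)))) := by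
  obtain ⟨hs2, hsq⟩ := hs
  have ha : 0 < x + z := by linarith
  have hrs : 0 < z*t/(x+z) := by positivity
  have h0 : 0 < s := by linarith
  have hst : s < t := by nlinarith
  have hts : 0 < t - s := by linarith
  have hr2 : 2*(z*t/(x+z)) ≤ t - s := by linarith
  rw [hk_prod d h0 hst]
  apply mul_le_mul_of_nonneg_left _
    (by positivity : (0:ℝ) ≤ (2*π)^(-(d:ℝ)) * Real.exp (-(x+z)^2/(2*t)))
  have hnumeq : (x*t-(x+z)*s)^2 = (x+z)^2 * ((t-s) - z*t/(x+z))^2 := by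
    have h1 : (x+z) * ((t-s) - z*t/(x+z)) = x*t - (x+z)*s := by
      field_simp; ring
    linear_combination (-((x+z) * ((t-s) - z*t/(x+z)) + (x*t - (x+z)*s))) * h1
  have hQ : (x+z)^2/(8*t^2) * (t - s) ≤ (x*t-(x+z)*s)^2/(2*(s*(t-s))*t) := by
    rw [hnumeq]
    have hmid : (t-s)/2 ≤ (t-s) - z*t/(x+z) := by linarith
    have hnum2 : (x+z)^2 * ((t-s)/2)^2 ≤ (x+z)^2 * ((t-s) - z*t/(x+z))^2 := by
      have h2 : (0:ℝ) ≤ (t-s)/2 := by linarith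
      exact mul_le_mul_of_nonneg_left (pow_le_pow_left₀ h2 hmid 2) (sq_nonneg (x+z))
    have hden : 2*(s*(t-s))*t ≤ 2*(t*(t-s))*t := by nlinarith
    have step : ((x+z)^2 * ((t-s)/2)^2)/(2*(t*(t-s))*t)
        ≤ ((x+z)^2 * ((t-s) - z*t/(x+z))^2)/(2*(s*(t-s))*t) :=
      div_le_div₀ (by positivity) hnum2 (by positivity) hden
    have e1 : ((x+z)^2 * ((t-s)/2)^2)/(2*(t*(t-s))*t) = (x+z)^2/(8*t^2) * (t - s) := by
      field_simp; ring
    linarith [step, e1 ▸ step]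
  have hsplit : (s*(t-s)) ^ (-(d:ℝ)/2) = s ^ (-(d:ℝ)/2) * (t-s) ^ (-(d:ℝ)/2) :=
    Real.mul_rpow h0.le hts.le
  calc (s*(t-s)) ^ (-(d:ℝ)/2) * Real.exp (-((x*t-(x+z)*s)^2/(2*(s*(t-s))*t)))
      ≤ (s ^ (-(d:ℝ)/2) * (t-s) ^ (-(d:ℝ)/2)) *
          Real.exp (-((x+z)^2/(8*t^2) * (t - s))) := by
        rw [hsplit]
        apply mul_le_mul_of_nonneg_left (Real.exp_le_exp.mpr (by linarith))
          (mul_nonneg (Real.rpow_nonneg h0.le _) (Real.rpow_nonneg hts.le _))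
    _ ≤ ((t/2) ^ (-(d:ℝ)/2) * (2*(z*t/(x+z))) ^ (-(d:ℝ)/2)) *
          Real.exp (-((x+z)^2/(8*t^2) * (t - s))) := by
        apply mul_le_mul_of_nonneg_right _ (Real.exp_pos _).le
        apply mul_le_mul (rpow_anti' d (by positivity) hs2)
          (rpow_anti' d (by positivity) hr2) (Real.rpow_nonneg hts.le _)
          (Real.rpow_nonneg (by positivity) _)

lemma pw4 (d : ℕ) {x z t s : ℝ}
    (hz : 0 < z) (hzx : z ≤ x) (ht : 0 < t)
    (hs : s ∈ Icc (max (t/2) (t - 2*(z*t/(x+z)))) (t - z*t/(x+z)/2)) :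
    heatKernel d s x * heatKernel d (t-s) z
      ≤ (2*π)^(-(d:ℝ)) * Real.exp (-(x+z)^2/(2*t)) *
        ((t/2)^(-(d:ℝ)/2) * (z*t/(x+z)/2)^(-(d:ℝ)/2) *
          Real.exp (-((x+z)^3/(4*z*t^3) * (s - (t - z*t/(x+z)))^2))) := by
  obtain ⟨hsl, hsu⟩ := hs
  have ha : 0 < x + z := by linarith
  have hrs : 0 < z*t/(x+z) := by positivity
  have hs2 : t/2 ≤ s := le_trans (le_max_left _ _) hsl
  have hs3 : t - 2*(z*t/(x+z)) ≤ s := le_trans (le_max_right _ _) hsl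
  have h0 : 0 < s := by linarith
  have hst : s < t := by linarith
  have hts : 0 < t - s := by linarith
  have hr1 : z*t/(x+z)/2 ≤ t - s := by linarith
  have hr2 : t - s ≤ 2*(z*t/(x+z)) := by linarith
  rw [hk_prod d h0 hst]
  apply mul_le_mul_of_nonneg_left _
    (by positivity : (0:ℝ) ≤ (2*π)^(-(d:ℝ)) * Real.exp (-(x+z)^2/(2*t)))
  have h1 : (x+z) * (s - (t - z*t/(x+z))) = (x+z)*s - x*t := by
    field_simp; ring
  have hnumeq : (x*t-(x+z)*s)^2 = (x+z)^2 * (s - (t - z*t/(x+z)))^2 := by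
    linear_combination (-((x+z) * (s - (t - z*t/(x+z))) + ((x+z)*s - x*t))) * h1
  have hQ : (x+z)^3/(4*z*t^3) * (s - (t - z*t/(x+z)))^2
      ≤ (x*t-(x+z)*s)^2/(2*(s*(t-s))*t) := by
    rw [hnumeq]
    have hden : 2*(s*(t-s))*t ≤ 4*(z*t/(x+z))*t^2 := by
      nlinarith [mul_le_mul_of_nonneg_right (mul_le_mul_of_nonneg_right hst.le hts.le) ht.le,
        mul_le_mul_of_nonneg_right (mul_le_mul_of_nonneg_left hr2 ht.le) ht.le]
    have step : ((x+z)^2 * (s - (t - z*t/(x+z)))^2)/(4*(z*t/(x+z))*t^2)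
        ≤ ((x+z)^2 * (s - (t - z*t/(x+z)))^2)/(2*(s*(t-s))*t) :=
      div_le_div_of_nonneg_left (by positivity) (by positivity) hden
    have e1 : ((x+z)^2 * (s - (t - z*t/(x+z)))^2)/(4*(z*t/(x+z))*t^2)
        = (x+z)^3/(4*z*t^3) * (s - (t - z*t/(x+z)))^2 := by
      field_simp
    linarith [e1 ▸ step]
  have hsplit : (s*(t-s)) ^ (-(d:ℝ)/2) = s ^ (-(d:ℝ)/2) * (t-s) ^ (-(d:ℝ)/2) :=
    Real.mul_rpow h0.le hts.le
  calc (s*(t-s)) ^ (-(d:ℝ)/2) * Real.exp (-((x*t-(x+z)*s)^2/(2*(s*(t-s))*t)))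
      ≤ (s ^ (-(d:ℝ)/2) * (t-s) ^ (-(d:ℝ)/2)) *
          Real.exp (-((x+z)^3/(4*z*t^3) * (s - (t - z*t/(x+z)))^2)) := by
        rw [hsplit]
        apply mul_le_mul_of_nonneg_left (Real.exp_le_exp.mpr (by linarith))
          (mul_nonneg (Real.rpow_nonneg h0.le _) (Real.rpow_nonneg hts.le _))
    _ ≤ ((t/2) ^ (-(d:ℝ)/2) * (z*t/(x+z)/2) ^ (-(d:ℝ)/2)) *
          Real.exp (-((x+z)^3/(4*z*t^3) * (s - (t - z*t/(x+z)))^2)) := by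
        apply mul_le_mul_of_nonneg_right _ (Real.exp_pos _).le
        apply mul_le_mul (rpow_anti' d (by positivity) hs2)
          (rpow_anti' d (by positivity) hr1) (Real.rpow_nonneg hts.le _)
          (Real.rpow_nonneg (by positivity) _)

lemma pw5 (d : ℕ) (hd : 1 ≤ d) {x z t s : ℝ}
    (hz : 0 < z) (hzx : z ≤ x) (ht : 0 < t)
    (hs : s ∈ Icc (t - z*t/(x+z)/2) t) :
    heatKernel d s x * heatKernel d (t-s) z
      ≤ (2*π)^(-(d:ℝ)) * Real.exp (-(x+z)^2/(2*t)) *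
        ((t/2)^(-(d:ℝ)/2) * (((d:ℝ)^d+1) * (z^2/16)^(-(d:ℝ)/2) *
          Real.exp (-((x+z)*z/(8*t))))) := by
  obtain ⟨hsl, hsu⟩ := hs
  have ha : 0 < x + z := by linarith
  have hrs : 0 < z*t/(x+z) := by positivity
  have hrs2 : z*t/(x+z) ≤ t/2 := by
    rw [div_le_iff₀ ha]; nlinarith
  rcases eq_or_lt_of_le hsu with h0 | h0
  · rw [h0, sub_self, hk_zero d hd z, mul_zero]
    have h1 : (0:ℝ) ≤ (t/2)^(-(d:ℝ)/2) := Real.rpow_nonneg (by positivity) _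
    have h2 : (0:ℝ) ≤ (z^2/16)^(-(d:ℝ)/2) := Real.rpow_nonneg (by positivity) _
    have h3 : (0:ℝ) ≤ (2*π)^(-(d:ℝ)) := Real.rpow_nonneg (by positivity) _
    positivity
  · have hs2 : t/2 ≤ s := by linarith
    have hpos : 0 < s := by linarith
    have hts : 0 < t - s := by linarith
    have hrle : t - s ≤ z*t/(x+z)/2 := by linarith
    rw [hk_prod d hpos h0]
    apply mul_le_mul_of_nonneg_left _
      (by positivity : (0:ℝ) ≤ (2*π)^(-(d:ℝ)) * Real.exp (-(x+z)^2/(2*t)))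
    have hq : (0:ℝ) < z^2/16 := by positivity
    have h1 : (x+z) * ((t-s) - z*t/(x+z)) = x*t - (x+z)*s := by
      field_simp; ring
    have hnumeq : (x*t-(x+z)*s)^2 = (x+z)^2 * ((t-s) - z*t/(x+z))^2 := by
      linear_combination (-((x+z) * ((t-s) - z*t/(x+z)) + (x*t - (x+z)*s))) * h1
    -- (rs - r)^2 ≥ (rs/2)^2  with r ≤ rs/2
    have hmid : z*t/(x+z)/2 ≤ z*t/(x+z) - (t-s) := by linarith
    have hnum2 : (x+z)^2 * (z*t/(x+z)/2)^2 ≤ (x+z)^2 * ((t-s) - z*t/(x+z))^2 := by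
      have h2 : (0:ℝ) ≤ z*t/(x+z)/2 := by positivity
      have h4 : (z*t/(x+z)/2)^2 ≤ (z*t/(x+z) - (t-s))^2 := pow_le_pow_left₀ h2 hmid 2
      have h5 : (z*t/(x+z) - (t-s))^2 = ((t-s) - z*t/(x+z))^2 := by ring
      rw [h5] at h4
      exact mul_le_mul_of_nonneg_left h4 (sq_nonneg (x+z))
    have hden : 2*(s*(t-s))*t ≤ 2*(t*(t-s))*t := by
      nlinarith [mul_le_mul_of_nonneg_right (mul_le_mul_of_nonneg_right h0.le hts.le) ht.le]
    have step : ((x+z)^2 * (z*t/(x+z)/2)^2)/(2*(t*(t-s))*t)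
        ≤ (x*t-(x+z)*s)^2/(2*(s*(t-s))*t) := by
      rw [hnumeq]
      exact div_le_div₀ (by positivity) hnum2 (by positivity) hden
    have e1 : ((x+z)^2 * (z*t/(x+z)/2)^2)/(2*(t*(t-s))*t) = z^2/(8*(t-s)) := by
      field_simp; ring
    -- z^2/(8 r) = (z^2/16)/r + z^2/(16 r) ≥ (z^2/16)/r + (x+z) z/(8t)
    have e2 : z^2/(8*(t-s)) = z^2/16/(t-s) + z^2/(16*(t-s)) := by
      field_simp; ring
    have e3 : (x+z)*z/(8*t) ≤ z^2/(16*(t-s)) := by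
      rw [div_le_div_iff₀ (by positivity) (by positivity)]
      -- (x+z) z * (16 (t-s)) ≤ z^2 * 8 t  ⟸ (t-s) ≤ z t/(2(x+z))
      have h6 : 16*(t-s) ≤ 8*(z*t/(x+z)) := by linarith
      calc (x+z)*z*(16*(t-s)) ≤ (x+z)*z*(8*(z*t/(x+z))) := by
            apply mul_le_mul_of_nonneg_left h6 (by positivity)
        _ = z^2*(8*t) := by field_simp
    have hexp : Real.exp (-((x*t-(x+z)*s)^2/(2*(s*(t-s))*t)))
        ≤ Real.exp (-(z^2/16/(t-s))) * Real.exp (-((x+z)*z/(8*t))) := by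
      rw [← Real.exp_add]
      apply Real.exp_le_exp.mpr
      have := e1 ▸ step
      linarith [e2 ▸ this]
    have hsplit : (s*(t-s)) ^ (-(d:ℝ)/2) = s ^ (-(d:ℝ)/2) * (t-s) ^ (-(d:ℝ)/2) :=
      Real.mul_rpow hpos.le hts.le
    calc (s*(t-s)) ^ (-(d:ℝ)/2) * Real.exp (-((x*t-(x+z)*s)^2/(2*(s*(t-s))*t)))
        ≤ (s*(t-s)) ^ (-(d:ℝ)/2) *
            (Real.exp (-(z^2/16/(t-s))) * Real.exp (-((x+z)*z/(8*t)))) := by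
          apply mul_le_mul_of_nonneg_left hexp (Real.rpow_nonneg (by positivity) _)
      _ = ((t-s) ^ (-(d:ℝ)/2) * Real.exp (-(z^2/16/(t-s)))) * s ^ (-(d:ℝ)/2)
            * Real.exp (-((x+z)*z/(8*t))) := by rw [hsplit]; ring
      _ ≤ (((d:ℝ)^d+1) * (z^2/16)^(-(d:ℝ)/2)) * (t/2) ^ (-(d:ℝ)/2)
            * Real.exp (-((x+z)*z/(8*t))) := by
          apply mul_le_mul_of_nonneg_right _ (Real.exp_pos _).le
          apply mul_le_mul (sup_bound d hts hq) (rpow_anti' d (by positivity) hs2)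
            (Real.rpow_nonneg hpos.le _) (by positivity)
      _ = (t/2)^(-(d:ℝ)/2) * (((d:ℝ)^d+1) * (z^2/16)^(-(d:ℝ)/2) *
            Real.exp (-((x+z)*z/(8*t)))) := by ring

lemma f_int (d : ℕ) (hd : 1 ≤ d) {x z t : ℝ} (hz : 0 < z) (hzx : z ≤ x) (ht : 0 < t) :
    IntervalIntegrable (fun s => heatKernel d s x * heatKernel d (t - s) z)
      volume 0 t := by
  have hx : 0 < x := lt_of_lt_of_le hz hzx
  rw [intervalIntegrable_iff, uIoc_of_le ht.le]
  apply MeasureTheory.Integrable.mono'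
    (integrable_const ((((d:ℝ)^d+1) * (Real.pi*x^2) ^ (-(d:ℝ)/2)) *
      (((d:ℝ)^d+1) * (Real.pi*z^2) ^ (-(d:ℝ)/2))))
    ((f_meas d x z t).aestronglyMeasurable.restrict)
  filter_upwards [ae_restrict_mem measurableSet_Ioc] with s hs
  obtain ⟨hs0, hst⟩ := hs
  have h1 : 0 ≤ heatKernel d s x * heatKernel d (t - s) z :=
    mul_nonneg (hk_nonneg d hs0.le x) (hk_nonneg d (by linarith) z)
  rw [Real.norm_eq_abs, abs_of_nonneg h1]
  rcases eq_or_lt_of_le hst with he | hlt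
  · rw [he, sub_self, hk_zero d hd z, mul_zero]
    have p1 : (0:ℝ) ≤ (Real.pi*x^2) ^ (-(d:ℝ)/2) := Real.rpow_nonneg (by positivity) _
    have p2 : (0:ℝ) ≤ (Real.pi*z^2) ^ (-(d:ℝ)/2) := Real.rpow_nonneg (by positivity) _
    positivity
  · exact mul_le_mul (hk_le_const d hs0 hx) (hk_le_const d (by linarith) hz)
      (hk_nonneg d (by linarith) z)
      (mul_nonneg (by positivity) (Real.rpow_nonneg (by positivity) _))

lemma comp1 (d : ℕ) (hd : 1 ≤ d) (δ : ℝ) (hδ : 0 < δ) {x z t : ℝ}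
    (hz : 0 < z) (hzx : z ≤ x) (ht : 0 < t) (hδt : (x + z) * z > δ * t) :
    (t/4) * ((2*π)^(-(d:ℝ)) * Real.exp (-(x+z)^2/(2*t)) *
      ((t/2)^(-(d:ℝ)/2) * (((d:ℝ)^d+1) * ((x+z)^2/64)^(-(d:ℝ)/2) *
        Real.exp (-((x+z)^2/(16*t))))))
    ≤ (((d:ℝ)^d+1) * (2:ℝ)^(4*(d:ℝ)) * δ^((1-(d:ℝ))/2)) *
      (heatKernel d t (x+z) * ((x+z)/(t*z))^((d:ℝ)/2-1) * Real.sqrt (t/((x+z)*z))) := by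
  have ha : 0 < x + z := by linarith
  have hKd : (0:ℝ) < (d:ℝ)^d + 1 := by positivity
  have h2π : (0:ℝ) < 2*π := by positivity
  have h2πt : (0:ℝ) < 2*π*t := by positivity
  have hts : (0:ℝ) < t/2 := by positivity
  have ha64 : (0:ℝ) < (x+z)^2/64 := by positivity
  have hatz : (0:ℝ) < (x+z)/(t*z) := by positivity
  have htaz : (0:ℝ) < t/((x+z)*z) := by positivity
  have hd1 : (1:ℝ) ≤ (d:ℝ) := by exact_mod_cast hd
  -- convert t/4 and Kd and everything to exp...
  rw [heatKernel]
  rw [Real.sqrt_eq_rpow]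
  rw [show (t/4) = Real.exp (Real.log (t/4)) from (Real.exp_log (by positivity)).symm,
      show ((d:ℝ)^d+1) = Real.exp (Real.log ((d:ℝ)^d+1)) from (Real.exp_log hKd).symm,
      show δ^((1-(d:ℝ))/2) = Real.exp (Real.log δ * ((1-(d:ℝ))/2)) from Real.rpow_def_of_pos hδ _]
  rw [Real.rpow_def_of_pos h2π, Real.rpow_def_of_pos hts, Real.rpow_def_of_pos ha64,
      Real.rpow_def_of_pos two_pos, Real.rpow_def_of_pos h2πt, Real.rpow_def_of_pos hatz,
      Real.rpow_def_of_pos htaz]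
  simp only [← Real.exp_add]
  rw [Real.exp_le_exp]
  have e1 : Real.log (2*π) = Real.log 2 + Real.log π := Real.log_mul (by norm_num) (by positivity)
  have e2 : Real.log (t/2) = Real.log t - Real.log 2 := Real.log_div (by positivity) (by norm_num)
  have e2' : Real.log (t/4) = Real.log t - 2*Real.log 2 := by
    rw [Real.log_div (by positivity) (by norm_num), show (4:ℝ) = 2^2 by norm_num, Real.log_pow]
    push_cast; ring
  have e3 : Real.log ((x+z)^2/64) = 2*Real.log (x+z) - 6*Real.log 2 := by
    rw [Real.log_div (by positivity) (by norm_num), Real.log_pow,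
        show (64:ℝ) = 2^6 by norm_num, Real.log_pow]
    push_cast; ring
  have e5 : Real.log (2*π*t) = Real.log 2 + Real.log π + Real.log t := by
    rw [Real.log_mul (by positivity) (by positivity), e1]
  have e6 : Real.log ((x+z)/(t*z)) = Real.log (x+z) - Real.log t - Real.log z := by
    rw [Real.log_div (by positivity) (by positivity), Real.log_mul (by positivity) (by positivity)]
    ring
  have e7 : Real.log (t/((x+z)*z)) = Real.log t - Real.log (x+z) - Real.log z := by
    rw [Real.log_div (by positivity) (by positivity), Real.log_mul (by positivity) (by positivity)]
    ring
  rw [e1, e2, e2', e3, e5, e6, e7]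
  have hl2 : 0 ≤ Real.log 2 := Real.log_nonneg (by norm_num)
  have hlπ : 0 ≤ Real.log π := Real.log_nonneg (by linarith [Real.pi_gt_three])
  have hd0 : (0:ℝ) ≤ (d:ℝ) := by positivity
  have hlzla : Real.log z ≤ Real.log (x+z) := Real.log_le_log hz (by linarith)
  have hlog1 : Real.log δ + Real.log t ≤ 2*Real.log (x+z) := by
    have h1 : Real.log (δ*t) ≤ Real.log ((x+z)^2) :=
      Real.log_le_log (by positivity) (by nlinarith)
    rw [Real.log_mul (by positivity) (by positivity), Real.log_pow] at h1
    push_cast at h1; linarith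
  have hA : (0:ℝ) ≤ (x+z)^2/(16*t) := by positivity
  have hc12 : (0:ℝ) ≤ (d:ℝ)/2 - 1/2 := by linarith
  nlinarith [mul_nonneg hd0 hl2, mul_nonneg hd0 hlπ,
    mul_nonneg hc12 (sub_nonneg.mpr hlzla),
    mul_nonneg hc12 (by linarith : (0:ℝ) ≤ 2*Real.log (x+z) - Real.log t - Real.log δ)]

lemma comp2 (d : ℕ) (hd : 1 ≤ d) {x z t : ℝ}
    (hz : 0 < z) (hzx : z ≤ x) (ht : 0 < t) :
    (2*π)^(-(d:ℝ)) * Real.exp (-(x+z)^2/(2*t)) *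
      ((t/4)^(-(d:ℝ)/2) * (t/2)^(-(d:ℝ)/2)) *
      Real.sqrt (π/((x+z)^2/t^3))
    ≤ ((2:ℝ)^(2*(d:ℝ)) * Real.sqrt π) *
      (heatKernel d t (x+z) * ((x+z)/(t*z))^((d:ℝ)/2-1) * Real.sqrt (t/((x+z)*z))) := by
  have ha : 0 < x + z := by linarith
  have h2π : (0:ℝ) < 2*π := by positivity
  have h2πt : (0:ℝ) < 2*π*t := by positivity
  have hts : (0:ℝ) < t/2 := by positivity
  have hts4 : (0:ℝ) < t/4 := by positivity
  have hc2 : (0:ℝ) < π/((x+z)^2/t^3) := by positivity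
  have hatz : (0:ℝ) < (x+z)/(t*z) := by positivity
  have htaz : (0:ℝ) < t/((x+z)*z) := by positivity
  have hd1 : (1:ℝ) ≤ (d:ℝ) := by exact_mod_cast hd
  rw [heatKernel]
  rw [Real.sqrt_eq_rpow, Real.sqrt_eq_rpow, Real.sqrt_eq_rpow]
  rw [Real.rpow_def_of_pos h2π, Real.rpow_def_of_pos hts, Real.rpow_def_of_pos hts4,
      Real.rpow_def_of_pos hc2, Real.rpow_def_of_pos two_pos, Real.rpow_def_of_pos Real.pi_pos,
      Real.rpow_def_of_pos h2πt, Real.rpow_def_of_pos hatz, Real.rpow_def_of_pos htaz]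
  simp only [← Real.exp_add]
  rw [Real.exp_le_exp]
  have e1 : Real.log (2*π) = Real.log 2 + Real.log π := Real.log_mul (by norm_num) (by positivity)
  have e2 : Real.log (t/2) = Real.log t - Real.log 2 := Real.log_div (by positivity) (by norm_num)
  have e2' : Real.log (t/4) = Real.log t - 2*Real.log 2 := by
    rw [Real.log_div (by positivity) (by norm_num), show (4:ℝ) = 2^2 by norm_num, Real.log_pow]
    push_cast; ring
  have e4 : Real.log (π/((x+z)^2/t^3))
      = Real.log π - 2*Real.log (x+z) + 3*Real.log t := by
    rw [Real.log_div (by positivity) (by positivity), Real.log_div (by positivity) (by positivity),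
        Real.log_pow, Real.log_pow]
    push_cast; ring
  have e5 : Real.log (2*π*t) = Real.log 2 + Real.log π + Real.log t := by
    rw [Real.log_mul (by positivity) (by positivity), e1]
  have e6 : Real.log ((x+z)/(t*z)) = Real.log (x+z) - Real.log t - Real.log z := by
    rw [Real.log_div (by positivity) (by positivity), Real.log_mul (by positivity) (by positivity)]
    ring
  have e7 : Real.log (t/((x+z)*z)) = Real.log t - Real.log (x+z) - Real.log z := by
    rw [Real.log_div (by positivity) (by positivity), Real.log_mul (by positivity) (by positivity)]
    ring
  rw [e1, e2, e2', e4, e5, e6, e7]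
  have hl2 : 0 ≤ Real.log 2 := Real.log_nonneg (by norm_num)
  have hlπ : 0 ≤ Real.log π := Real.log_nonneg (by linarith [Real.pi_gt_three])
  have hd0 : (0:ℝ) ≤ (d:ℝ) := by positivity
  have hlzla : Real.log z ≤ Real.log (x+z) := Real.log_le_log hz (by linarith)
  have hc12 : (0:ℝ) ≤ (d:ℝ)/2 - 1/2 := by linarith
  nlinarith [mul_nonneg hd0 hl2, mul_nonneg hd0 hlπ,
    mul_nonneg hc12 (sub_nonneg.mpr hlzla)]

lemma comp3 (d : ℕ) (hd : 1 ≤ d) (δ : ℝ) (hδ : 0 < δ) {x z t : ℝ}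
    (hz : 0 < z) (hzx : z ≤ x) (ht : 0 < t) (hδt : (x + z) * z > δ * t) :
    (2*π)^(-(d:ℝ)) * Real.exp (-(x+z)^2/(2*t)) *
      ((t/2)^(-(d:ℝ)/2) * (2*(z*t/(x+z)))^(-(d:ℝ)/2)) *
      (8*t^2/(x+z)^2 * Real.exp (-((x+z)*z/(4*t))))
    ≤ ((2:ℝ)^(3:ℝ) * δ^(-(1:ℝ)/2)) *
      (heatKernel d t (x+z) * ((x+z)/(t*z))^((d:ℝ)/2-1) * Real.sqrt (t/((x+z)*z))) := by
  have ha : 0 < x + z := by linarith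
  have h2π : (0:ℝ) < 2*π := by positivity
  have h2πt : (0:ℝ) < 2*π*t := by positivity
  have hts : (0:ℝ) < t/2 := by positivity
  have hrs : (0:ℝ) < 2*(z*t/(x+z)) := by positivity
  have h8t : (0:ℝ) < 8*t^2/(x+z)^2 := by positivity
  have hatz : (0:ℝ) < (x+z)/(t*z) := by positivity
  have htaz : (0:ℝ) < t/((x+z)*z) := by positivity
  have hd1 : (1:ℝ) ≤ (d:ℝ) := by exact_mod_cast hd
  rw [heatKernel]
  rw [Real.sqrt_eq_rpow]
  rw [show (8*t^2/(x+z)^2) = Real.exp (Real.log (8*t^2/(x+z)^2)) from (Real.exp_log h8t).symm,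
      show δ^(-(1:ℝ)/2) = Real.exp (Real.log δ * (-(1:ℝ)/2)) from Real.rpow_def_of_pos hδ _]
  rw [Real.rpow_def_of_pos h2π, Real.rpow_def_of_pos hts, Real.rpow_def_of_pos hrs,
      Real.rpow_def_of_pos two_pos, Real.rpow_def_of_pos h2πt, Real.rpow_def_of_pos hatz,
      Real.rpow_def_of_pos htaz]
  simp only [← Real.exp_add]
  rw [Real.exp_le_exp]
  have e1 : Real.log (2*π) = Real.log 2 + Real.log π := Real.log_mul (by norm_num) (by positivity)
  have e2 : Real.log (t/2) = Real.log t - Real.log 2 := Real.log_div (by positivity) (by norm_num)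
  have e3 : Real.log (2*(z*t/(x+z))) = Real.log 2 + Real.log z + Real.log t - Real.log (x+z) := by
    rw [Real.log_mul (by norm_num) (by positivity), Real.log_div (by positivity) (by positivity),
        Real.log_mul (by positivity) (by positivity)]
    ring
  have e4 : Real.log (8*t^2/(x+z)^2) = 3*Real.log 2 + 2*Real.log t - 2*Real.log (x+z) := by
    rw [Real.log_div (by positivity) (by positivity), Real.log_mul (by norm_num) (by positivity),
        Real.log_pow, Real.log_pow, show (8:ℝ) = 2^3 by norm_num, Real.log_pow]
    push_cast; ring
  have e5 : Real.log (2*π*t) = Real.log 2 + Real.log π + Real.log t := by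
    rw [Real.log_mul (by positivity) (by positivity), e1]
  have e6 : Real.log ((x+z)/(t*z)) = Real.log (x+z) - Real.log t - Real.log z := by
    rw [Real.log_div (by positivity) (by positivity), Real.log_mul (by positivity) (by positivity)]
    ring
  have e7 : Real.log (t/((x+z)*z)) = Real.log t - Real.log (x+z) - Real.log z := by
    rw [Real.log_div (by positivity) (by positivity), Real.log_mul (by positivity) (by positivity)]
    ring
  rw [e1, e2, e3, e4, e5, e6, e7]
  have hl2 : 0 ≤ Real.log 2 := Real.log_nonneg (by norm_num)
  have hlπ : 0 ≤ Real.log π := Real.log_nonneg (by linarith [Real.pi_gt_three])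
  have hd0 : (0:ℝ) ≤ (d:ℝ) := by positivity
  have hγ : (0:ℝ) ≤ (x+z)*z/(4*t) := by positivity
  have hlog2 : Real.log δ + Real.log t ≤ Real.log (x+z) + Real.log z := by
    have h1 : Real.log (δ*t) ≤ Real.log ((x+z)*z) :=
      Real.log_le_log (by positivity) (by nlinarith)
    rw [Real.log_mul (by positivity) (by positivity),
        Real.log_mul (by positivity) (by positivity)] at h1
    linarith
  nlinarith [mul_nonneg hd0 hl2, mul_nonneg hd0 hlπ]

lemma comp5 (d : ℕ) (hd : 1 ≤ d) (δ : ℝ) (hδ : 0 < δ) {x z t : ℝ}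
    (hz : 0 < z) (hzx : z ≤ x) (ht : 0 < t) (hδt : (x + z) * z > δ * t) :
    (z*t/(x+z)/2) * ((2*π)^(-(d:ℝ)) * Real.exp (-(x+z)^2/(2*t)) *
      ((t/2)^(-(d:ℝ)/2) * (((d:ℝ)^d+1) * (z^2/16)^(-(d:ℝ)/2) *
        Real.exp (-((x+z)*z/(8*t))))))
    ≤ (((d:ℝ)^d+1) * (2:ℝ)^(3*(d:ℝ)) * δ^((1-(d:ℝ))/2)) *
      (heatKernel d t (x+z) * ((x+z)/(t*z))^((d:ℝ)/2-1) * Real.sqrt (t/((x+z)*z))) := by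
  have ha : 0 < x + z := by linarith
  have hKd : (0:ℝ) < (d:ℝ)^d + 1 := by positivity
  have h2π : (0:ℝ) < 2*π := by positivity
  have h2πt : (0:ℝ) < 2*π*t := by positivity
  have hts : (0:ℝ) < t/2 := by positivity
  have hz16 : (0:ℝ) < z^2/16 := by positivity
  have hrs2 : (0:ℝ) < z*t/(x+z)/2 := by positivity
  have hatz : (0:ℝ) < (x+z)/(t*z) := by positivity
  have htaz : (0:ℝ) < t/((x+z)*z) := by positivity
  have hd1 : (1:ℝ) ≤ (d:ℝ) := by exact_mod_cast hd
  rw [heatKernel]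
  rw [Real.sqrt_eq_rpow]
  rw [show (z*t/(x+z)/2) = Real.exp (Real.log (z*t/(x+z)/2)) from (Real.exp_log hrs2).symm,
      show ((d:ℝ)^d+1) = Real.exp (Real.log ((d:ℝ)^d+1)) from (Real.exp_log hKd).symm,
      show δ^((1-(d:ℝ))/2) = Real.exp (Real.log δ * ((1-(d:ℝ))/2)) from Real.rpow_def_of_pos hδ _]
  rw [Real.rpow_def_of_pos h2π, Real.rpow_def_of_pos hts, Real.rpow_def_of_pos hz16,
      Real.rpow_def_of_pos two_pos, Real.rpow_def_of_pos h2πt, Real.rpow_def_of_pos hatz,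
      Real.rpow_def_of_pos htaz]
  simp only [← Real.exp_add]
  rw [Real.exp_le_exp]
  have e1 : Real.log (2*π) = Real.log 2 + Real.log π := Real.log_mul (by norm_num) (by positivity)
  have e2 : Real.log (t/2) = Real.log t - Real.log 2 := Real.log_div (by positivity) (by norm_num)
  have e3 : Real.log (z*t/(x+z)/2) = Real.log z + Real.log t - Real.log (x+z) - Real.log 2 := by
    rw [Real.log_div (by positivity) (by norm_num), Real.log_div (by positivity) (by positivity),
        Real.log_mul (by positivity) (by positivity)]
  have e4 : Real.log (z^2/16) = 2*Real.log z - 4*Real.log 2 := by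
    rw [Real.log_div (by positivity) (by norm_num), Real.log_pow,
        show (16:ℝ) = 2^4 by norm_num, Real.log_pow]
    push_cast; ring
  have e5 : Real.log (2*π*t) = Real.log 2 + Real.log π + Real.log t := by
    rw [Real.log_mul (by positivity) (by positivity), e1]
  have e6 : Real.log ((x+z)/(t*z)) = Real.log (x+z) - Real.log t - Real.log z := by
    rw [Real.log_div (by positivity) (by positivity), Real.log_mul (by positivity) (by positivity)]
    ring
  have e7 : Real.log (t/((x+z)*z)) = Real.log t - Real.log (x+z) - Real.log z := by
    rw [Real.log_div (by positivity) (by positivity), Real.log_mul (by positivity) (by positivity)]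
    ring
  rw [e1, e2, e3, e4, e5, e6, e7]
  have hl2 : 0 ≤ Real.log 2 := Real.log_nonneg (by norm_num)
  have hlπ : 0 ≤ Real.log π := Real.log_nonneg (by linarith [Real.pi_gt_three])
  have hd0 : (0:ℝ) ≤ (d:ℝ) := by positivity
  have hγ : (0:ℝ) ≤ (x+z)*z/(8*t) := by positivity
  have hc12 : (0:ℝ) ≤ (d:ℝ)/2 - 1/2 := by linarith
  have hlog2 : Real.log δ + Real.log t ≤ Real.log (x+z) + Real.log z := by
    have h1 : Real.log (δ*t) ≤ Real.log ((x+z)*z) :=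
      Real.log_le_log (by positivity) (by nlinarith)
    rw [Real.log_mul (by positivity) (by positivity),
        Real.log_mul (by positivity) (by positivity)] at h1
    linarith
  nlinarith [mul_nonneg hd0 hl2, mul_nonneg hd0 hlπ,
    mul_nonneg hc12 (by linarith : (0:ℝ) ≤ Real.log (x+z) + Real.log z - Real.log t - Real.log δ)]

lemma comp4 (d : ℕ) (hd : 1 ≤ d) {x z t : ℝ} (hz : 0 < z) (hzx : z ≤ x) (ht : 0 < t) :
    (2*π)^(-(d:ℝ)) * Real.exp (-(x+z)^2/(2*t)) *
      ((t/2)^(-(d:ℝ)/2) * (z*t/(x+z)/2)^(-(d:ℝ)/2)) *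
      Real.sqrt (π/((x+z)^3/(4*z*t^3)))
    ≤ (2:ℝ)^((d:ℝ)+1) * Real.sqrt π *
      (heatKernel d t (x+z) * ((x+z)/(t*z))^((d:ℝ)/2-1) * Real.sqrt (t/((x+z)*z))) := by
  have ha : 0 < x + z := by linarith
  have h2π : (0:ℝ) < 2*π := by positivity
  have h2πt : (0:ℝ) < 2*π*t := by positivity
  have hts : (0:ℝ) < t/2 := by positivity
  have hrs2 : (0:ℝ) < z*t/(x+z)/2 := by positivity
  have hc4 : (0:ℝ) < π/((x+z)^3/(4*z*t^3)) := by positivity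
  have hatz : (0:ℝ) < (x+z)/(t*z) := by positivity
  have htaz : (0:ℝ) < t/((x+z)*z) := by positivity
  rw [heatKernel]
  rw [Real.sqrt_eq_rpow, Real.sqrt_eq_rpow, Real.sqrt_eq_rpow]
  rw [Real.rpow_def_of_pos h2π, Real.rpow_def_of_pos hts, Real.rpow_def_of_pos hrs2,
      Real.rpow_def_of_pos hc4, Real.rpow_def_of_pos two_pos, Real.rpow_def_of_pos Real.pi_pos,
      Real.rpow_def_of_pos h2πt, Real.rpow_def_of_pos hatz, Real.rpow_def_of_pos htaz]
  simp only [← Real.exp_add]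
  rw [Real.exp_le_exp]
  have e1 : Real.log (2*π) = Real.log 2 + Real.log π := Real.log_mul (by norm_num) (by positivity)
  have e2 : Real.log (t/2) = Real.log t - Real.log 2 := Real.log_div (by positivity) (by norm_num)
  have e3 : Real.log (z*t/(x+z)/2) = Real.log z + Real.log t - Real.log (x+z) - Real.log 2 := by
    rw [Real.log_div (by positivity) (by norm_num), Real.log_div (by positivity) (by positivity),
        Real.log_mul (by positivity) (by positivity)]
  have e4 : Real.log (π/((x+z)^3/(4*z*t^3)))
      = Real.log π - (3*Real.log (x+z) - (2*Real.log 2 + Real.log z + 3*Real.log t)) := by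
    rw [Real.log_div (by positivity) (by positivity), Real.log_div (by positivity) (by positivity),
        Real.log_mul (by positivity) (by positivity), Real.log_mul (by norm_num) (by positivity),
        Real.log_pow, Real.log_pow]
    rw [show (4:ℝ) = 2^2 by norm_num, Real.log_pow]
    push_cast; ring
  have e5 : Real.log (2*π*t) = Real.log 2 + Real.log π + Real.log t := by
    rw [Real.log_mul (by positivity) (by positivity), e1]
  have e6 : Real.log ((x+z)/(t*z)) = Real.log (x+z) - Real.log t - Real.log z := by
    rw [Real.log_div (by positivity) (by positivity), Real.log_mul (by positivity) (by positivity)]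
    ring
  have e7 : Real.log (t/((x+z)*z)) = Real.log t - Real.log (x+z) - Real.log z := by
    rw [Real.log_div (by positivity) (by positivity), Real.log_mul (by positivity) (by positivity)]
    ring
  rw [e1, e2, e3, e4, e5, e6, e7]
  have hl2 : 0 ≤ Real.log 2 := Real.log_nonneg (by norm_num)
  have hlπ : 0 ≤ Real.log π := Real.log_nonneg (by linarith [Real.pi_gt_three])
  have hd0 : (0:ℝ) ≤ (d:ℝ) := by positivity
  nlinarith [mul_nonneg hd0 hl2, mul_nonneg hd0 hlπ]

theorem stmt3 (d : ℕ) (hd : 1 ≤ d) (δ : ℝ) (hδ : 0 < δ) :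
    ∃ C : ℝ, 0 < C ∧ ∀ x z t : ℝ, 0 < z → z ≤ x → 0 < t → (x + z) * z > δ * t →
      (∫ s in (0:ℝ)..t, heatKernel d s x * heatKernel d (t - s) z) ≤
        C * heatKernel d t (x + z) * ((x + z) / (t * z)) ^ ((d : ℝ) / 2 - 1) *
          Real.sqrt (t / ((x + z) * z)) := by
  have hC1 : (0:ℝ) < ((d:ℝ)^d+1) * (2:ℝ)^(4*(d:ℝ)) * δ^((1-(d:ℝ))/2) := by
    have := Real.rpow_pos_of_pos hδ ((1-(d:ℝ))/2)
    have := Real.rpow_pos_of_pos (show (0:ℝ) < 2 by norm_num) (4*(d:ℝ))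
    positivity
  have hC2 : (0:ℝ) < (2:ℝ)^(2*(d:ℝ)) * Real.sqrt π := by
    have := Real.rpow_pos_of_pos (show (0:ℝ) < 2 by norm_num) (2*(d:ℝ))
    have := Real.sqrt_pos.mpr Real.pi_pos
    positivity
  have hC3 : (0:ℝ) < (2:ℝ)^(3:ℝ) * δ^(-(1:ℝ)/2) := by
    have := Real.rpow_pos_of_pos hδ (-(1:ℝ)/2)
    have := Real.rpow_pos_of_pos (show (0:ℝ) < 2 by norm_num) (3:ℝ)
    positivity
  have hC4 : (0:ℝ) < (2:ℝ)^((d:ℝ)+1) * Real.sqrt π := by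
    have := Real.rpow_pos_of_pos (show (0:ℝ) < 2 by norm_num) ((d:ℝ)+1)
    have := Real.sqrt_pos.mpr Real.pi_pos
    positivity
  have hC5 : (0:ℝ) < ((d:ℝ)^d+1) * (2:ℝ)^(3*(d:ℝ)) * δ^((1-(d:ℝ))/2) := by
    have := Real.rpow_pos_of_pos hδ ((1-(d:ℝ))/2)
    have := Real.rpow_pos_of_pos (show (0:ℝ) < 2 by norm_num) (3*(d:ℝ))
    positivity
  refine ⟨((d:ℝ)^d+1) * (2:ℝ)^(4*(d:ℝ)) * δ^((1-(d:ℝ))/2)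
      + (2:ℝ)^(2*(d:ℝ)) * Real.sqrt π
      + (2:ℝ)^(3:ℝ) * δ^(-(1:ℝ)/2)
      + (2:ℝ)^((d:ℝ)+1) * Real.sqrt π
      + ((d:ℝ)^d+1) * (2:ℝ)^(3*(d:ℝ)) * δ^((1-(d:ℝ))/2), by linarith, ?_⟩
  intro x z t hz hzx ht hδt
  have hx : 0 < x := lt_of_lt_of_le hz hzx
  have ha : 0 < x + z := by linarith
  have hrs : 0 < z*t/(x+z) := by positivity
  have hrs2 : z*t/(x+z) ≤ t/2 := by
    rw [div_le_iff₀ ha]; nlinarith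
  have hW : 0 < heatKernel d t (x+z) * ((x+z)/(t*z))^((d:ℝ)/2-1) *
      Real.sqrt (t/((x+z)*z)) := by
    have h1 : 0 < heatKernel d t (x+z) := by
      rw [heatKernel]
      have : (0:ℝ) < 2*Real.pi*t := by positivity
      positivity
    have h2 : (0:ℝ) < ((x+z)/(t*z))^((d:ℝ)/2-1) := Real.rpow_pos_of_pos (by positivity) _
    have h3 : (0:ℝ) < Real.sqrt (t/((x+z)*z)) := Real.sqrt_pos.mpr (by positivity)
    positivity
  -- ordering
  have o1 : (0:ℝ) ≤ t/4 := by linarith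
  have o2 : t/4 ≤ t/2 := by linarith
  have o3 : t/2 ≤ max (t/2) (t - 2*(z*t/(x+z))) := le_max_left _ _
  have o4 : max (t/2) (t - 2*(z*t/(x+z))) ≤ t - z*t/(x+z)/2 := by
    apply max_le <;> linarith
  have o5 : t - z*t/(x+z)/2 ≤ t := by linarith
  -- integrability of f on subintervals
  have hf := f_int d hd hz hzx ht
  have hsub : ∀ p q : ℝ, 0 ≤ p → p ≤ q → q ≤ t →
      IntervalIntegrable (fun s => heatKernel d s x * heatKernel d (t - s) z)
        volume p q := by
    intro p q hp hpq hq
    apply hf.mono_set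
    rw [uIcc_of_le ht.le, uIcc_of_le hpq]
    intro u hu
    exact ⟨by linarith [hu.1], by linarith [hu.2]⟩
  -- splitting
  have s1 := integral_add_adjacent_intervals
    (hsub 0 (t/4) le_rfl (by linarith) (by linarith)) (hsub (t/4) (t/2) (by linarith) (by linarith) (by linarith))
  have s2 := integral_add_adjacent_intervals
    (hsub 0 (t/2) le_rfl (by linarith) (by linarith))
    (hsub (t/2) (max (t/2) (t - 2*(z*t/(x+z)))) (by linarith) o3 (by linarith [o4, o5]))
  have s3 := integral_add_adjacent_intervals
    (hsub 0 (max (t/2) (t - 2*(z*t/(x+z)))) le_rfl (by linarith [o3]) (by linarith [o4, o5]))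
    (hsub (max (t/2) (t - 2*(z*t/(x+z)))) (t - z*t/(x+z)/2) (by linarith [o3]) o4 (by linarith))
  have s4 := integral_add_adjacent_intervals
    (hsub 0 (t - z*t/(x+z)/2) le_rfl (by linarith [o3, o4]) (by linarith))
    (hsub (t - z*t/(x+z)/2) t (by linarith [o3, o4]) o5 le_rfl)
  -- piece 1
  have I1 : (∫ s in (0:ℝ)..(t/4), heatKernel d s x * heatKernel d (t - s) z)
      ≤ (((d:ℝ)^d+1) * (2:ℝ)^(4*(d:ℝ)) * δ^((1-(d:ℝ))/2)) *
        (heatKernel d t (x+z) * ((x+z)/(t*z))^((d:ℝ)/2-1) * Real.sqrt (t/((x+z)*z))) := by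
    calc (∫ s in (0:ℝ)..(t/4), heatKernel d s x * heatKernel d (t - s) z)
        ≤ ∫ _ in (0:ℝ)..(t/4), (2*π)^(-(d:ℝ)) * Real.exp (-(x+z)^2/(2*t)) *
            ((t/2)^(-(d:ℝ)/2) * (((d:ℝ)^d+1) * ((x+z)^2/64)^(-(d:ℝ)/2) *
              Real.exp (-((x+z)^2/(16*t))))) := by
          apply integral_mono_on o1 (hsub 0 (t/4) le_rfl (by linarith) (by linarith))
            intervalIntegrable_const
          intro s hs; exact pw1 d hd hz hzx ht hs
      _ = (t/4 - 0) • ((2*π)^(-(d:ℝ)) * Real.exp (-(x+z)^2/(2*t)) *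
            ((t/2)^(-(d:ℝ)/2) * (((d:ℝ)^d+1) * ((x+z)^2/64)^(-(d:ℝ)/2) *
              Real.exp (-((x+z)^2/(16*t)))))) := integral_const _
      _ = (t/4) * ((2*π)^(-(d:ℝ)) * Real.exp (-(x+z)^2/(2*t)) *
            ((t/2)^(-(d:ℝ)/2) * (((d:ℝ)^d+1) * ((x+z)^2/64)^(-(d:ℝ)/2) *
              Real.exp (-((x+z)^2/(16*t)))))) := by rw [smul_eq_mul]; ring
      _ ≤ _ := comp1 d hd δ hδ hz hzx ht hδt
  -- piece 2
  have hEpos : (0:ℝ) ≤ (2*π)^(-(d:ℝ)) * Real.exp (-(x+z)^2/(2*t)) :=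
    mul_nonneg (Real.rpow_nonneg (by positivity) _) (Real.exp_pos _).le
  have I2 : (∫ s in (t/4)..(t/2), heatKernel d s x * heatKernel d (t - s) z)
      ≤ ((2:ℝ)^(2*(d:ℝ)) * Real.sqrt π) *
        (heatKernel d t (x+z) * ((x+z)/(t*z))^((d:ℝ)/2-1) * Real.sqrt (t/((x+z)*z))) := by
    have hc2 : (0:ℝ) < (x+z)^2/t^3 := by positivity
    have hpref : (0:ℝ) ≤ (2*π)^(-(d:ℝ)) * Real.exp (-(x+z)^2/(2*t)) *
        ((t/4)^(-(d:ℝ)/2) * (t/2)^(-(d:ℝ)/2)) :=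
      mul_nonneg hEpos (mul_nonneg (Real.rpow_nonneg (by positivity) _)
        (Real.rpow_nonneg (by positivity) _))
    calc (∫ s in (t/4)..(t/2), heatKernel d s x * heatKernel d (t - s) z)
        ≤ ∫ s in (t/4)..(t/2), (2*π)^(-(d:ℝ)) * Real.exp (-(x+z)^2/(2*t)) *
            ((t/4)^(-(d:ℝ)/2) * (t/2)^(-(d:ℝ)/2) *
              Real.exp (-((x+z)^2/t^3 * (s - (t - z*t/(x+z)))^2))) := by
          apply integral_mono_on o2 (hsub (t/4) (t/2) (by linarith) (by linarith) (by linarith))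
            (by apply Continuous.intervalIntegrable; fun_prop)
          intro s hs; exact pw2 d hd hz hzx ht hs
      _ = ((2*π)^(-(d:ℝ)) * Real.exp (-(x+z)^2/(2*t)) *
            ((t/4)^(-(d:ℝ)/2) * (t/2)^(-(d:ℝ)/2))) *
            ∫ s in (t/4)..(t/2), Real.exp (-((x+z)^2/t^3 * (s - (t - z*t/(x+z)))^2)) := by
          rw [← intervalIntegral.integral_const_mul]
          apply intervalIntegral.integral_congr
          intro s _; ring
      _ ≤ ((2*π)^(-(d:ℝ)) * Real.exp (-(x+z)^2/(2*t)) *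
            ((t/4)^(-(d:ℝ)/2) * (t/2)^(-(d:ℝ)/2))) * Real.sqrt (π/((x+z)^2/t^3)) :=
          mul_le_mul_of_nonneg_left (gauss_int_le _ _ hc2) hpref
      _ ≤ _ := comp2 d hd hz hzx ht
  -- piece 3
  have I3 : (∫ s in (t/2)..(max (t/2) (t - 2*(z*t/(x+z)))),
        heatKernel d s x * heatKernel d (t - s) z)
      ≤ ((2:ℝ)^(3:ℝ) * δ^(-(1:ℝ)/2)) *
        (heatKernel d t (x+z) * ((x+z)/(t*z))^((d:ℝ)/2-1) * Real.sqrt (t/((x+z)*z))) := by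
    rcases le_or_gt (t - 2*(z*t/(x+z))) (t/2) with hcase | hcase
    · rw [max_eq_left hcase, integral_same]
      exact (mul_pos hC3 hW).le
    · rw [max_eq_right hcase.le]
      have hc3 : (0:ℝ) < (x+z)^2/(8*t^2) := by positivity
      have hpref : (0:ℝ) ≤ (2*π)^(-(d:ℝ)) * Real.exp (-(x+z)^2/(2*t)) *
          ((t/2)^(-(d:ℝ)/2) * (2*(z*t/(x+z)))^(-(d:ℝ)/2)) :=
        mul_nonneg hEpos (mul_nonneg (Real.rpow_nonneg (by positivity) _)
          (Real.rpow_nonneg (by positivity) _))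
      have ea : -((x+z)^2/(8*t^2)*(t - (t - 2*(z*t/(x+z))))) = -((x+z)*z/(4*t)) := by
        field_simp; ring
      calc (∫ s in (t/2)..(t - 2*(z*t/(x+z))), heatKernel d s x * heatKernel d (t - s) z)
          ≤ ∫ s in (t/2)..(t - 2*(z*t/(x+z))), (2*π)^(-(d:ℝ)) * Real.exp (-(x+z)^2/(2*t)) *
              ((t/2)^(-(d:ℝ)/2) * (2*(z*t/(x+z)))^(-(d:ℝ)/2) *
                Real.exp (-((x+z)^2/(8*t^2) * (t - s)))) := by
            apply integral_mono_on hcase.le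
              (hsub (t/2) (t - 2*(z*t/(x+z))) (by linarith) hcase.le (by linarith))
              (by apply Continuous.intervalIntegrable; fun_prop)
            intro s hs; exact pw3 d hd hz hzx ht hs
        _ = ((2*π)^(-(d:ℝ)) * Real.exp (-(x+z)^2/(2*t)) *
              ((t/2)^(-(d:ℝ)/2) * (2*(z*t/(x+z)))^(-(d:ℝ)/2))) *
              ∫ s in (t/2)..(t - 2*(z*t/(x+z))),
                Real.exp (-((x+z)^2/(8*t^2) * (t - s))) := by
            rw [← intervalIntegral.integral_const_mul]
            apply intervalIntegral.integral_congr
            intro s _; ring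
        _ ≤ ((2*π)^(-(d:ℝ)) * Real.exp (-(x+z)^2/(2*t)) *
              ((t/2)^(-(d:ℝ)/2) * (2*(z*t/(x+z)))^(-(d:ℝ)/2))) *
              (Real.exp (-((x+z)^2/(8*t^2)*(t - (t - 2*(z*t/(x+z))))))/((x+z)^2/(8*t^2))) :=
            mul_le_mul_of_nonneg_left (exp_int_le hc3 hcase.le) hpref
        _ = (2*π)^(-(d:ℝ)) * Real.exp (-(x+z)^2/(2*t)) *
              ((t/2)^(-(d:ℝ)/2) * (2*(z*t/(x+z)))^(-(d:ℝ)/2)) *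
              (8*t^2/(x+z)^2 * Real.exp (-((x+z)*z/(4*t)))) := by
            rw [ea, div_div_eq_mul_div]; ring
        _ ≤ _ := comp3 d hd δ hδ hz hzx ht hδt
  -- piece 4
  have I4 : (∫ s in (max (t/2) (t - 2*(z*t/(x+z))))..(t - z*t/(x+z)/2),
        heatKernel d s x * heatKernel d (t - s) z)
      ≤ ((2:ℝ)^((d:ℝ)+1) * Real.sqrt π) *
        (heatKernel d t (x+z) * ((x+z)/(t*z))^((d:ℝ)/2-1) * Real.sqrt (t/((x+z)*z))) := by
    have hc4 : (0:ℝ) < (x+z)^3/(4*z*t^3) := by positivity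
    have hpref : (0:ℝ) ≤ (2*π)^(-(d:ℝ)) * Real.exp (-(x+z)^2/(2*t)) *
        ((t/2)^(-(d:ℝ)/2) * (z*t/(x+z)/2)^(-(d:ℝ)/2)) :=
      mul_nonneg hEpos (mul_nonneg (Real.rpow_nonneg (by positivity) _)
        (Real.rpow_nonneg (by positivity) _))
    calc (∫ s in (max (t/2) (t - 2*(z*t/(x+z))))..(t - z*t/(x+z)/2),
          heatKernel d s x * heatKernel d (t - s) z)
        ≤ ∫ s in (max (t/2) (t - 2*(z*t/(x+z))))..(t - z*t/(x+z)/2),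
            (2*π)^(-(d:ℝ)) * Real.exp (-(x+z)^2/(2*t)) *
            ((t/2)^(-(d:ℝ)/2) * (z*t/(x+z)/2)^(-(d:ℝ)/2) *
              Real.exp (-((x+z)^3/(4*z*t^3) * (s - (t - z*t/(x+z)))^2))) := by
          apply integral_mono_on o4
            (hsub _ _ (by linarith [o3]) o4 (by linarith))
            (by apply Continuous.intervalIntegrable; fun_prop)
          intro s hs; exact pw4 d hz hzx ht hs
      _ = ((2*π)^(-(d:ℝ)) * Real.exp (-(x+z)^2/(2*t)) *
            ((t/2)^(-(d:ℝ)/2) * (z*t/(x+z)/2)^(-(d:ℝ)/2))) *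
            ∫ s in (max (t/2) (t - 2*(z*t/(x+z))))..(t - z*t/(x+z)/2),
              Real.exp (-((x+z)^3/(4*z*t^3) * (s - (t - z*t/(x+z)))^2)) := by
          rw [← intervalIntegral.integral_const_mul]
          apply intervalIntegral.integral_congr
          intro s _; ring
      _ ≤ ((2*π)^(-(d:ℝ)) * Real.exp (-(x+z)^2/(2*t)) *
            ((t/2)^(-(d:ℝ)/2) * (z*t/(x+z)/2)^(-(d:ℝ)/2))) *
            Real.sqrt (π/((x+z)^3/(4*z*t^3))) :=
          mul_le_mul_of_nonneg_left (gauss_int_le _ _ hc4) hpref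
      _ ≤ _ := comp4 d hd hz hzx ht
  -- piece 5
  have I5 : (∫ s in (t - z*t/(x+z)/2)..t, heatKernel d s x * heatKernel d (t - s) z)
      ≤ (((d:ℝ)^d+1) * (2:ℝ)^(3*(d:ℝ)) * δ^((1-(d:ℝ))/2)) *
        (heatKernel d t (x+z) * ((x+z)/(t*z))^((d:ℝ)/2-1) * Real.sqrt (t/((x+z)*z))) := by
    calc (∫ s in (t - z*t/(x+z)/2)..t, heatKernel d s x * heatKernel d (t - s) z)
        ≤ ∫ _ in (t - z*t/(x+z)/2)..t, (2*π)^(-(d:ℝ)) * Real.exp (-(x+z)^2/(2*t)) *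
            ((t/2)^(-(d:ℝ)/2) * (((d:ℝ)^d+1) * (z^2/16)^(-(d:ℝ)/2) *
              Real.exp (-((x+z)*z/(8*t))))) := by
          apply integral_mono_on o5 (hsub _ t (by linarith [o3, o4]) o5 le_rfl)
            intervalIntegrable_const
          intro s hs; exact pw5 d hd hz hzx ht hs
      _ = (t - (t - z*t/(x+z)/2)) • ((2*π)^(-(d:ℝ)) * Real.exp (-(x+z)^2/(2*t)) *
            ((t/2)^(-(d:ℝ)/2) * (((d:ℝ)^d+1) * (z^2/16)^(-(d:ℝ)/2) *
              Real.exp (-((x+z)*z/(8*t)))))) := integral_const _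
      _ = (z*t/(x+z)/2) * ((2*π)^(-(d:ℝ)) * Real.exp (-(x+z)^2/(2*t)) *
            ((t/2)^(-(d:ℝ)/2) * (((d:ℝ)^d+1) * (z^2/16)^(-(d:ℝ)/2) *
              Real.exp (-((x+z)*z/(8*t)))))) := by rw [smul_eq_mul]; ring
      _ ≤ _ := comp5 d hd δ hδ hz hzx ht hδt
  have hsplitfinal :
      (∫ s in (0:ℝ)..t, heatKernel d s x * heatKernel d (t - s) z)
      = (∫ s in (0:ℝ)..(t/4), heatKernel d s x * heatKernel d (t - s) z)
      + (∫ s in (t/4)..(t/2), heatKernel d s x * heatKernel d (t - s) z)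
      + (∫ s in (t/2)..(max (t/2) (t - 2*(z*t/(x+z)))),
          heatKernel d s x * heatKernel d (t - s) z)
      + (∫ s in (max (t/2) (t - 2*(z*t/(x+z))))..(t - z*t/(x+z)/2),
          heatKernel d s x * heatKernel d (t - s) z)
      + (∫ s in (t - z*t/(x+z)/2)..t, heatKernel d s x * heatKernel d (t - s) z) := by
    linarith [s1, s2, s3, s4]
  have hring : (((d:ℝ)^d+1) * (2:ℝ)^(4*(d:ℝ)) * δ^((1-(d:ℝ))/2)
      + (2:ℝ)^(2*(d:ℝ)) * Real.sqrt π
      + (2:ℝ)^(3:ℝ) * δ^(-(1:ℝ)/2)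
      + (2:ℝ)^((d:ℝ)+1) * Real.sqrt π
      + ((d:ℝ)^d+1) * (2:ℝ)^(3*(d:ℝ)) * δ^((1-(d:ℝ))/2)) *
      (heatKernel d t (x+z) * ((x+z)/(t*z))^((d:ℝ)/2-1) * Real.sqrt (t/((x+z)*z)))
      = (((d:ℝ)^d+1) * (2:ℝ)^(4*(d:ℝ)) * δ^((1-(d:ℝ))/2)
      + (2:ℝ)^(2*(d:ℝ)) * Real.sqrt π
      + (2:ℝ)^(3:ℝ) * δ^(-(1:ℝ)/2)
      + (2:ℝ)^((d:ℝ)+1) * Real.sqrt π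
      + ((d:ℝ)^d+1) * (2:ℝ)^(3*(d:ℝ)) * δ^((1-(d:ℝ))/2)) *
      heatKernel d t (x+z) * ((x+z)/(t*z))^((d:ℝ)/2-1) * Real.sqrt (t/((x+z)*z)) := by
    ring
  rw [hsplitfinal]
  linarith [I1, I2, I3, I4, I5, hring]
end

section
/- Let X_t be a standard one-dimensional Brownian motion and T_b its first passage time to level b. There exists a universal constant c > 0 such that for all 0 < b < ℓ with ρ₁ := b/ℓ ≤ 1/2 and all t > 0, the Brownian bridge probability P[ (ρ₁t)/2 < T_b < ρ₁t | X_0 = 0, X_t = ℓ ] is at least c·min(1, √(bℓ/t)). -/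
open Real intervalIntegral

/-- First passage time density of standard Brownian motion from 0 to level x:
`q(x,t) = (x/t) p_t^{(1)}(x)`. -/
noncomputable def fpd (x t : ℝ) : ℝ := (x / t) * heatKernel 1 t x

lemma hk_sqrt (u x : ℝ) (hu : 0 < u) :
    heatKernel 1 u x = (Real.sqrt (2 * Real.pi * u))⁻¹ * Real.exp (-x ^ 2 / (2 * u)) := by
  unfold heatKernel
  congr 1
  rw [show (-((1:ℕ):ℝ)/2) = -(1/2 : ℝ) by norm_num,
    Real.rpow_neg (by positivity), ← Real.sqrt_eq_rpow]

set_option maxHeartbeats 1000000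

/-- The Brownian bridge probability `P[ρ₁t/2 < T_b < ρ₁t | X_0 = 0, X_t = ℓ]`, written as
`(∫_{ρ₁t/2}^{ρ₁t} p^{(1)}_{t-s}(ℓ-b) q(b,s) ds) / p^{(1)}_t(ℓ)`, is at least c·min(1,√(bℓ/t)). -/
theorem stmt4 : ∃ c : ℝ, 0 < c ∧ ∀ b ℓ t : ℝ, 0 < b → b < ℓ → b / ℓ ≤ 1 / 2 → 0 < t →
    c * min 1 (Real.sqrt (b * ℓ / t)) * heatKernel 1 t ℓ ≤
      ∫ s in (b / ℓ * t / 2)..(b / ℓ * t), heatKernel 1 (t - s) (ℓ - b) * fpd b s := by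
  refine ⟨Real.exp (-2) / (2 * Real.sqrt (2 * Real.pi)), by positivity, ?_⟩
  intro b ℓ t hb hbl hhalf ht
  have hl : 0 < ℓ := hb.trans hbl
  have h2b : 2 * b ≤ ℓ := by
    rw [div_le_div_iff₀ hl (by norm_num)] at hhalf
    linarith
  set d : ℝ := b / ℓ * t with hd_def
  have hd0 : 0 < d := by positivity
  have hld : ℓ * d = b * t := by
    rw [hd_def]; field_simp
  have hd_le : 2 * d ≤ t := by
    have h1 : ℓ * (2 * d) ≤ ℓ * t := by nlinarith
    exact le_of_mul_le_mul_left h1 hl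
  set ε : ℝ := min (1/2 : ℝ) (Real.sqrt (t / (b * ℓ))) with hε_def
  have hε0 : 0 < ε := lt_min (by norm_num) (Real.sqrt_pos.2 (by positivity))
  have hε_half : ε ≤ 1/2 := min_le_left _ _
  have hε_sq : ε ^ 2 * (b * ℓ) ≤ t := by
    have h1 : ε ≤ Real.sqrt (t / (b * ℓ)) := min_le_right _ _
    have h2 : ε ^ 2 ≤ t / (b * ℓ) := by
      have h3 := Real.sq_sqrt (show (0:ℝ) ≤ t / (b * ℓ) by positivity)
      nlinarith [hε0.le]
    calc ε ^ 2 * (b * ℓ) ≤ (t / (b * ℓ)) * (b * ℓ) :=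
          mul_le_mul_of_nonneg_right h2 (by positivity)
      _ = t := by field_simp
  set s0 : ℝ := d - ε * d with hs0_def
  have hs0a : d / 2 ≤ s0 := by
    have : ε * d ≤ (1/2) * d := mul_le_mul_of_nonneg_right hε_half hd0.le
    rw [hs0_def]; linarith
  have hs0d : s0 ≤ d := by
    have : 0 ≤ ε * d := by positivity
    rw [hs0_def]; linarith
  have hs0pos : 0 < s0 := lt_of_lt_of_le (by positivity) hs0a
  set C : ℝ := (Real.sqrt (2 * Real.pi * t))⁻¹ *
      ((ℓ / t) * ((Real.sqrt (2 * Real.pi * d))⁻¹ * Real.exp (-ℓ ^ 2 / (2 * t) - 2)))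
    with hC_def
  -- pointwise lower bound on [s0, d]
  have hpoint : ∀ s ∈ Set.Icc s0 d, C ≤ heatKernel 1 (t - s) (ℓ - b) * fpd b s := by
    intro s hs
    obtain ⟨hs1, hs2⟩ := hs
    have hspos : 0 < s := hs0pos.trans_le hs1
    have hds : d / 2 ≤ s := le_trans hs0a hs1
    have htd : t / 2 ≤ t - s := by linarith
    have htspos : 0 < t - s := by linarith
    rw [hk_sqrt _ _ htspos, fpd, hk_sqrt _ _ hspos]
    -- key quadratic bound
    have e3 : d - s ≤ ε * d := by rw [hs0_def] at hs1; linarith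
    have e2 : 0 ≤ d - s := by linarith
    have e4 : (d - s) ^ 2 ≤ ε ^ 2 * d ^ 2 := by nlinarith
    have key : (b * t - ℓ * s) ^ 2 ≤ 4 * t * s * (t - s) := by
      have e1 : b * t - ℓ * s = ℓ * (d - s) := by rw [← hld]; ring
      have h5 : ℓ ^ 2 * (d - s) ^ 2 ≤ ℓ ^ 2 * (ε ^ 2 * d ^ 2) :=
        mul_le_mul_of_nonneg_left e4 (sq_nonneg ℓ)
      have hsq : ℓ ^ 2 * d ^ 2 = b ^ 2 * t ^ 2 := by linear_combination (ℓ * d + b * t) * hld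
      have h6 : ℓ ^ 2 * (ε ^ 2 * d ^ 2) * ℓ ≤ (b * t ^ 2) * t := by
        calc ℓ ^ 2 * (ε ^ 2 * d ^ 2) * ℓ = (ε ^ 2 * (b * ℓ)) * (b * t ^ 2) := by
              linear_combination ε ^ 2 * ℓ * hsq
          _ ≤ t * (b * t ^ 2) := mul_le_mul_of_nonneg_right hε_sq (by positivity)
          _ = (b * t ^ 2) * t := by ring
      have hprod : (d / 2) * (t / 2) ≤ s * (t - s) :=
        mul_le_mul hds htd (by positivity) hspos.le
      have h7 : (b * t ^ 2) * t ≤ 4 * t * s * (t - s) * ℓ := by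
        have h8 : (4 * t * ℓ) * ((d / 2) * (t / 2)) ≤ (4 * t * ℓ) * (s * (t - s)) :=
          mul_le_mul_of_nonneg_left hprod (by positivity)
        have e7 : (4 * t * ℓ) * ((d / 2) * (t / 2)) = (b * t ^ 2) * t := by
          linear_combination t ^ 2 * hld
        have e8 : (4 * t * ℓ) * (s * (t - s)) = 4 * t * s * (t - s) * ℓ := by ring
        linarith
      have h9 : ℓ ^ 2 * (d - s) ^ 2 * ℓ ≤ 4 * t * s * (t - s) * ℓ := by
        calc ℓ ^ 2 * (d - s) ^ 2 * ℓ ≤ ℓ ^ 2 * (ε ^ 2 * d ^ 2) * ℓ :=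
              mul_le_mul_of_nonneg_right h5 hl.le
          _ ≤ (b * t ^ 2) * t := h6
          _ ≤ 4 * t * s * (t - s) * ℓ := h7
      have h10 : ℓ ^ 2 * (d - s) ^ 2 ≤ 4 * t * s * (t - s) :=
        le_of_mul_le_mul_right h9 hl
      calc (b * t - ℓ * s) ^ 2 = ℓ ^ 2 * (d - s) ^ 2 := by rw [e1]; ring
        _ ≤ 4 * t * s * (t - s) := h10
    have hexpo : (ℓ - b) ^ 2 / (2 * (t - s)) + b ^ 2 / (2 * s) ≤ ℓ ^ 2 / (2 * t) + 2 := by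
      have hrep : ℓ ^ 2 / (2 * t) + 2 - ((ℓ - b) ^ 2 / (2 * (t - s)) + b ^ 2 / (2 * s)) =
          (4 * t * s * (t - s) - (b * t - ℓ * s) ^ 2) / (2 * t * s * (t - s)) := by
        field_simp
        ring
      have hnn : 0 ≤ (4 * t * s * (t - s) - (b * t - ℓ * s) ^ 2) / (2 * t * s * (t - s)) :=
        div_nonneg (by linarith) (by positivity)
      linarith [hrep ▸ hnn]
    have hcomb : Real.exp (-ℓ ^ 2 / (2 * t) - 2) ≤
        Real.exp (-(ℓ - b) ^ 2 / (2 * (t - s))) * Real.exp (-b ^ 2 / (2 * s)) := by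
      rw [← Real.exp_add]
      apply Real.exp_le_exp.2
      rw [neg_div, neg_div, neg_div]
      linarith
    have f1 : (Real.sqrt (2 * Real.pi * t))⁻¹ ≤ (Real.sqrt (2 * Real.pi * (t - s)))⁻¹ := by
      apply inv_anti₀ (Real.sqrt_pos.2 (by positivity))
      exact Real.sqrt_le_sqrt (by nlinarith [Real.pi_pos])
    have f3 : (Real.sqrt (2 * Real.pi * d))⁻¹ ≤ (Real.sqrt (2 * Real.pi * s))⁻¹ := by
      apply inv_anti₀ (Real.sqrt_pos.2 (by positivity))
      exact Real.sqrt_le_sqrt (by nlinarith [Real.pi_pos])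
    have f2 : ℓ / t ≤ b / s := by
      rw [div_le_div_iff₀ ht hspos]
      nlinarith [mul_le_mul_of_nonneg_left hs2 hl.le]
    calc C ≤ (Real.sqrt (2 * Real.pi * (t - s)))⁻¹ *
        ((b / s) * ((Real.sqrt (2 * Real.pi * s))⁻¹ *
          (Real.exp (-(ℓ - b) ^ 2 / (2 * (t - s))) * Real.exp (-b ^ 2 / (2 * s))))) := by
          rw [hC_def]
          gcongr <;> positivity
      _ = (Real.sqrt (2 * Real.pi * (t - s)))⁻¹ * Real.exp (-(ℓ - b) ^ 2 / (2 * (t - s))) *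
          (b / s * ((Real.sqrt (2 * Real.pi * s))⁻¹ * Real.exp (-b ^ 2 / (2 * s)))) := by ring
  -- integrability / continuity
  have hcont : ContinuousOn (fun s => heatKernel 1 (t - s) (ℓ - b) * fpd b s)
      (Set.Icc (d / 2) d) := by
    have hts : ∀ x ∈ Set.Icc (d / 2) d, 0 < t - x := fun x hx => by
      have := hx.2; linarith
    have hxs : ∀ x ∈ Set.Icc (d / 2) d, 0 < x := fun x hx => lt_of_lt_of_le (by positivity) hx.1
    unfold heatKernel fpd heatKernel
    apply ContinuousOn.mul
    · apply ContinuousOn.mul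
      · apply ContinuousOn.rpow_const
        · exact (continuous_const.mul (continuous_const.sub continuous_id)).continuousOn
        · intro x hx
          left
          have := hts x hx
          positivity
      · apply Real.continuous_exp.comp_continuousOn
        apply ContinuousOn.div continuousOn_const
        · exact (continuous_const.mul (continuous_const.sub continuous_id)).continuousOn
        · intro x hx
          have := hts x hx
          positivity
    · apply ContinuousOn.mul
      · apply ContinuousOn.div continuousOn_const continuousOn_id
        intro x hx
        exact (hxs x hx).ne'
      · apply ContinuousOn.mul
        · apply ContinuousOn.rpow_const
          · exact (continuous_const.mul continuous_id).continuousOn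
          · intro x hx
            left
            have := hxs x hx
            positivity
        · apply Real.continuous_exp.comp_continuousOn
          apply ContinuousOn.div continuousOn_const
          · exact (continuous_const.mul continuous_id).continuousOn
          · intro x hx
            have := hxs x hx
            positivity
  have hsub1 : Set.uIcc (d / 2) s0 ⊆ Set.Icc (d / 2) d := by
    rw [Set.uIcc_of_le hs0a]
    exact Set.Icc_subset_Icc le_rfl hs0d
  have hsub2 : Set.uIcc s0 d ⊆ Set.Icc (d / 2) d := by
    rw [Set.uIcc_of_le hs0d]
    exact Set.Icc_subset_Icc hs0a le_rfl
  have hInt1 : IntervalIntegrable (fun s => heatKernel 1 (t - s) (ℓ - b) * fpd b s)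
      MeasureTheory.volume (d / 2) s0 := (hcont.mono hsub1).intervalIntegrable
  have hInt2 : IntervalIntegrable (fun s => heatKernel 1 (t - s) (ℓ - b) * fpd b s)
      MeasureTheory.volume s0 d := (hcont.mono hsub2).intervalIntegrable
  have hsplit := intervalIntegral.integral_add_adjacent_intervals hInt1 hInt2
  have hFnn : ∀ s ∈ Set.Icc (d / 2) s0, 0 ≤ heatKernel 1 (t - s) (ℓ - b) * fpd b s := by
    intro s hs
    have hspos : 0 < s := lt_of_lt_of_le (by positivity) hs.1
    have htspos : 0 < t - s := by
      have := hs.2.trans hs0d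
      linarith
    rw [hk_sqrt _ _ htspos, fpd, hk_sqrt _ _ hspos]
    positivity
  have h1 : 0 ≤ ∫ s in (d / 2)..s0, heatKernel 1 (t - s) (ℓ - b) * fpd b s :=
    intervalIntegral.integral_nonneg hs0a hFnn
  have h2 : (d - s0) * C ≤ ∫ s in s0..d, heatKernel 1 (t - s) (ℓ - b) * fpd b s := by
    have := intervalIntegral.integral_mono_on hs0d intervalIntegrable_const hInt2 hpoint
    rwa [intervalIntegral.integral_const, smul_eq_mul] at this
  have hint_ge : (d - s0) * C ≤
      ∫ s in (b / ℓ * t / 2)..(b / ℓ * t), heatKernel 1 (t - s) (ℓ - b) * fpd b s := by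
    calc (d - s0) * C ≤ ∫ s in s0..d, heatKernel 1 (t - s) (ℓ - b) * fpd b s := h2
      _ ≤ ∫ s in (d / 2)..d, heatKernel 1 (t - s) (ℓ - b) * fpd b s := by
          rw [← hsplit]; linarith
      _ = ∫ s in (b / ℓ * t / 2)..(b / ℓ * t), heatKernel 1 (t - s) (ℓ - b) * fpd b s := by
          rw [hd_def]
  -- final arithmetic
  refine le_trans ?_ hint_ge
  have hds0 : d - s0 = ε * d := by rw [hs0_def]; ring
  rw [hds0, hk_sqrt _ _ ht]
  have A1 : d * (ℓ / t) = b := by rw [hd_def]; field_simp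
  have A2 : Real.sqrt (2 * Real.pi * d) = Real.sqrt (2 * Real.pi) * Real.sqrt d :=
    Real.sqrt_mul (by positivity) d
  have A3 : Real.sqrt (b * ℓ / t) * Real.sqrt d = b := by
    rw [← Real.sqrt_mul (by positivity)]
    have : b * ℓ / t * d = b ^ 2 := by rw [hd_def]; field_simp
    rw [this, Real.sqrt_sq hb.le]
  have A4 : min 1 (Real.sqrt (b * ℓ / t)) ≤ 2 * (ε * Real.sqrt (b * ℓ / t)) := by
    rcases le_total (1/2 : ℝ) (Real.sqrt (t / (b * ℓ))) with h | h
    · have hε_eq : ε = 1/2 := min_eq_left h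
      rw [hε_eq]
      have := min_le_right (1:ℝ) (Real.sqrt (b * ℓ / t))
      linarith
    · have hε_eq : ε = Real.sqrt (t / (b * ℓ)) := min_eq_right h
      have hvu : Real.sqrt (t / (b * ℓ)) * Real.sqrt (b * ℓ / t) = 1 := by
        rw [← Real.sqrt_mul (by positivity)]
        have : t / (b * ℓ) * (b * ℓ / t) = 1 := by field_simp
        rw [this, Real.sqrt_one]
      rw [hε_eq, hvu]
      have := min_le_left (1:ℝ) (Real.sqrt (b * ℓ / t))
      linarith
  -- reduce to the scalar inequality
  have hP : (0:ℝ) < (Real.sqrt (2 * Real.pi * t))⁻¹ * Real.exp (-ℓ ^ 2 / (2 * t)) := by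
    positivity
  have hcore : Real.exp (-2) / (2 * Real.sqrt (2 * Real.pi)) * min 1 (Real.sqrt (b * ℓ / t)) ≤
      ε * d * ((ℓ / t) * ((Real.sqrt (2 * Real.pi * d))⁻¹ * Real.exp (-2))) := by
    have hsd : (0:ℝ) < Real.sqrt d := Real.sqrt_pos.2 hd0
    have hs2pi : (0:ℝ) < Real.sqrt (2 * Real.pi) := Real.sqrt_pos.2 (by positivity)
    have hrhs : ε * d * ((ℓ / t) * ((Real.sqrt (2 * Real.pi * d))⁻¹ * Real.exp (-2))) =
        Real.exp (-2) / (2 * Real.sqrt (2 * Real.pi)) *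
          (2 * (ε * Real.sqrt (b * ℓ / t))) := by
      calc ε * d * ((ℓ / t) * ((Real.sqrt (2 * Real.pi * d))⁻¹ * Real.exp (-2)))
          = ε * (d * (ℓ / t)) * ((Real.sqrt (2 * Real.pi) * Real.sqrt d)⁻¹ * Real.exp (-2)) := by
            rw [A2]; ring
        _ = ε * (Real.sqrt (b * ℓ / t) * Real.sqrt d) *
            ((Real.sqrt (2 * Real.pi) * Real.sqrt d)⁻¹ * Real.exp (-2)) := by rw [A1, A3]
        _ = ε * Real.sqrt (b * ℓ / t) * Real.exp (-2) * (Real.sqrt (2 * Real.pi))⁻¹ *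
            (Real.sqrt d * (Real.sqrt d)⁻¹) := by rw [mul_inv]; ring
        _ = Real.exp (-2) / (2 * Real.sqrt (2 * Real.pi)) *
            (2 * (ε * Real.sqrt (b * ℓ / t))) := by
            rw [mul_inv_cancel₀ hsd.ne', mul_one]
            field_simp
    rw [hrhs]
    exact mul_le_mul_of_nonneg_left A4 (by positivity)
  calc Real.exp (-2) / (2 * Real.sqrt (2 * Real.pi)) * min 1 (Real.sqrt (b * ℓ / t)) *
        ((Real.sqrt (2 * Real.pi * t))⁻¹ * Real.exp (-ℓ ^ 2 / (2 * t)))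
      ≤ ε * d * ((ℓ / t) * ((Real.sqrt (2 * Real.pi * d))⁻¹ * Real.exp (-2))) *
        ((Real.sqrt (2 * Real.pi * t))⁻¹ * Real.exp (-ℓ ^ 2 / (2 * t))) :=
        mul_le_mul_of_nonneg_right hcore hP.le
    _ = ε * d * C := by
        rw [hC_def, show -ℓ ^ 2 / (2 * t) - 2 = -ℓ ^ 2 / (2 * t) + (-2) by ring, Real.exp_add]
        ring
end

section
/- Let q(x,t) = (x/t)(2πt)^{−1/2} e^{−x²/(2t)} denote the density of the first passage time of a standard Brownian motion from 0 to x > 0. There is a universal constant c > 0 such that for all 0 < b < ℓ with ρ₁ := b/ℓ ≤ 1/2 and all t > 0, ∫_{ρ₁t/2}^{ρ₁t} q(ℓ−b, t−s) q(b, s) ds ≥ c·min(1, √(bℓ/t)) · q(ℓ, t). -/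
set_option maxHeartbeats 1000000
open Real intervalIntegral

lemma heatKernel_one (t x : ℝ) (ht : 0 < t) :
    heatKernel 1 t x = (Real.sqrt (2 * Real.pi * t))⁻¹ * Real.exp (-x ^ 2 / (2 * t)) := by
  unfold heatKernel
  rw [show (-(1:ℕ):ℝ)/2 = -(1/2 : ℝ) by norm_num, Real.rpow_neg (by positivity),
    ← Real.sqrt_eq_rpow]

lemma fpd_continuousOn (x : ℝ) : ContinuousOn (fun t => fpd x t) {t | t ≠ 0} := by
  unfold fpd heatKernel
  apply ContinuousOn.mul
  · exact continuousOn_const.div continuousOn_id fun t ht => ht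
  · apply ContinuousOn.mul
    · refine ContinuousOn.rpow_const (continuousOn_const.mul continuousOn_id) fun t ht => ?_
      exact Or.inl (mul_ne_zero (by positivity) ht)
    · refine Real.continuous_exp.comp_continuousOn ?_
      exact continuousOn_const.div (continuousOn_const.mul continuousOn_id)
        fun t ht => mul_ne_zero two_ne_zero ht

lemma min_key (su : ℝ) (hsu : 0 < su) : min 1 su ≤ su * min 1 (2 / su) := by
  rcases le_total su 2 with h | h
  · have h1 : (1:ℝ) ≤ 2 / su := (one_le_div hsu).mpr h
    rw [min_eq_left h1, mul_one]
    exact min_le_right _ _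
  · have h1 : 2 / su ≤ 1 := (div_le_one hsu).mpr h
    rw [min_eq_right h1, mul_div_cancel₀ _ hsu.ne']
    exact le_trans (min_le_left _ _) (by norm_num)

theorem stmt5 : ∃ c : ℝ, 0 < c ∧ ∀ b ℓ t : ℝ, 0 < b → b < ℓ → b / ℓ ≤ 1 / 2 → 0 < t →
    c * min 1 (Real.sqrt (b * ℓ / t)) * fpd ℓ t ≤
      ∫ s in (b / ℓ * t / 2)..(b / ℓ * t), fpd (ℓ - b) (t - s) * fpd b s := by
  refine ⟨Real.exp (-2) / (4 * Real.sqrt (2 * Real.pi)), by positivity, ?_⟩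
  intro b ℓ t hb hbl hρ ht
  have hπ := Real.pi_pos
  have hl : 0 < ℓ := hb.trans hbl
  have hb2 : 2 * b ≤ ℓ := by
    rw [div_le_div_iff₀ hl (by norm_num)] at hρ; linarith
  obtain ⟨a, ha_def⟩ : ∃ x : ℝ, x = b / ℓ * t / 2 := ⟨_, rfl⟩
  obtain ⟨c0, hc0_def⟩ : ∃ x : ℝ, x = b / ℓ * t := ⟨_, rfl⟩
  obtain ⟨u, hu_def⟩ : ∃ x : ℝ, x = b * ℓ / t := ⟨_, rfl⟩
  obtain ⟨su, hsu_def⟩ : ∃ x : ℝ, x = Real.sqrt u := ⟨_, rfl⟩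
  rw [show b / ℓ * t / 2 = a from ha_def.symm, show b / ℓ * t = c0 from hc0_def.symm,
    show Real.sqrt (b * ℓ / t) = su by rw [hsu_def, hu_def]]
  have hu : 0 < u := by rw [hu_def]; positivity
  have hsu : 0 < su := by rw [hsu_def]; exact Real.sqrt_pos.mpr hu
  obtain ⟨w, hw_def⟩ : ∃ x : ℝ, x = b * t / (2 * ℓ) * min 1 (2 / su) := ⟨_, rfl⟩
  have hmin2_pos : 0 < min 1 (2 / su) := lt_min one_pos (by positivity)
  have hmin2_le : min 1 (2 / su) ≤ 1 := min_le_left _ _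
  have hw_pos : 0 < w := by rw [hw_def]; positivity
  have hac0 : a = c0 / 2 := by rw [ha_def, hc0_def]
  have hc0_pos : 0 < c0 := by rw [hc0_def]; positivity
  have hw_le : w ≤ c0 / 2 := by
    rw [hw_def, hc0_def]
    calc b * t / (2 * ℓ) * min 1 (2 / su) ≤ b * t / (2 * ℓ) * 1 :=
          mul_le_mul_of_nonneg_left hmin2_le (by positivity)
      _ = b / ℓ * t / 2 := by ring
  have hc0_le : c0 ≤ t / 2 := by
    rw [hc0_def]
    rw [div_le_div_iff₀ hl (by norm_num)] at hρ
    rw [div_mul_eq_mul_div, div_le_div_iff₀ hl (by norm_num)]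
    nlinarith
  obtain ⟨a', ha'_def⟩ : ∃ x : ℝ, x = c0 - w := ⟨_, rfl⟩
  have haa' : a ≤ a' := by rw [ha'_def, hac0]; linarith
  have ha'c0 : a' ≤ c0 := by rw [ha'_def]; linarith
  have ha_pos : 0 < a := by rw [hac0]; positivity
  have hs_facts : ∀ s ∈ Set.Icc a c0, 0 < s ∧ t / 2 ≤ t - s := by
    intro s hs
    exact ⟨ha_pos.trans_le hs.1, by have := hs.2; linarith⟩
  have hcont : ContinuousOn (fun s => fpd (ℓ - b) (t - s) * fpd b s) (Set.Icc a c0) := by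
    apply ContinuousOn.mul
    · refine (fpd_continuousOn (ℓ - b)).comp (continuousOn_const.sub continuousOn_id) ?_
      intro s hs
      have := (hs_facts s hs).2
      simp only [Set.mem_setOf_eq]
      intro h; rw [h] at this; linarith [ht]
    · refine (fpd_continuousOn b).comp continuousOn_id ?_
      intro s hs
      exact ne_of_gt (hs_facts s hs).1
  have hnonneg : ∀ s ∈ Set.Icc a c0, 0 ≤ fpd (ℓ - b) (t - s) * fpd b s := by
    intro s hs
    obtain ⟨hs0, hts⟩ := hs_facts s hs
    have hts0 : 0 < t - s := lt_of_lt_of_le (by linarith) hts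
    rw [fpd, fpd, heatKernel_one _ _ hts0, heatKernel_one _ _ hs0]
    have hlb : 0 < ℓ - b := by linarith
    positivity
  have hint : IntervalIntegrable (fun s => fpd (ℓ - b) (t - s) * fpd b s)
      MeasureTheory.volume a c0 := by
    apply ContinuousOn.intervalIntegrable
    rwa [Set.uIcc_of_le (by linarith)]
  have hint1 : IntervalIntegrable (fun s => fpd (ℓ - b) (t - s) * fpd b s)
      MeasureTheory.volume a a' :=
    hint.mono_set (by rw [Set.uIcc_of_le haa', Set.uIcc_of_le (haa'.trans ha'c0)]
                      exact Set.Icc_subset_Icc le_rfl ha'c0)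
  have hint2 : IntervalIntegrable (fun s => fpd (ℓ - b) (t - s) * fpd b s)
      MeasureTheory.volume a' c0 :=
    hint.mono_set (by rw [Set.uIcc_of_le ha'c0, Set.uIcc_of_le (haa'.trans ha'c0)]
                      exact Set.Icc_subset_Icc haa' le_rfl)
  obtain ⟨E, hE_def⟩ : ∃ x : ℝ, x = Real.exp (-ℓ ^ 2 / (2 * t)) := ⟨_, rfl⟩
  obtain ⟨g, hg_def⟩ : ∃ x : ℝ, x = ℓ / (2 * t) * (ℓ / t) *
      ((Real.sqrt (2 * Real.pi * t))⁻¹ * Real.sqrt (ℓ / (2 * Real.pi * b * t))) *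
      Real.exp (-ℓ ^ 2 / (2 * t) + -2) := ⟨_, rfl⟩
  have hpoint : ∀ s ∈ Set.Icc a' c0, g ≤ fpd (ℓ - b) (t - s) * fpd b s := by
    intro s hs
    have hsA : s ∈ Set.Icc a c0 := ⟨haa'.trans hs.1, hs.2⟩
    obtain ⟨hs0, hts⟩ := hs_facts s hsA
    have hts0 : 0 < t - s := lt_of_lt_of_le (by linarith) hts
    have hlb : 0 < ℓ - b := by linarith
    have hf : fpd (ℓ - b) (t - s) * fpd b s =
        ((ℓ - b) / (t - s) * (b / s)) *
          ((Real.sqrt (2 * Real.pi * (t - s)))⁻¹ * (Real.sqrt (2 * Real.pi * s))⁻¹) *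
          Real.exp (-(ℓ - b) ^ 2 / (2 * (t - s)) + -b ^ 2 / (2 * s)) := by
      rw [fpd, fpd, heatKernel_one _ _ hts0, heatKernel_one _ _ hs0, Real.exp_add]; ring
    rw [hf, hg_def]
    have hls_le : ℓ * s ≤ b * t := by
      have h := hs.2; rw [hc0_def] at h
      calc ℓ * s ≤ ℓ * (b / ℓ * t) := by nlinarith
        _ = b * t := by field_simp
    have hexp : -ℓ ^ 2 / (2 * t) + -2 ≤ -(ℓ - b) ^ 2 / (2 * (t - s)) + -b ^ 2 / (2 * s) := by
      have hiden : (ℓ - b) ^ 2 / (2 * (t - s)) + b ^ 2 / (2 * s) =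
          ℓ ^ 2 / (2 * t) + (ℓ * s - b * t) ^ 2 / (2 * t * s * (t - s)) := by
        field_simp
        ring
      have hlc0 : ℓ * c0 = b * t := by rw [hc0_def]; field_simp
      have hmul := mul_le_mul_of_nonneg_left hs.1 hl.le
      have hnum : (ℓ * s - b * t) ^ 2 ≤ (ℓ * w) ^ 2 := by
        apply sq_le_sq'
        · rw [ha'_def] at hmul; nlinarith
        · nlinarith [mul_pos hl hw_pos]
      have hlw : (ℓ * w) ^ 2 ≤ b * t ^ 3 / ℓ := by
        have h1 : ℓ * w = b * t / 2 * min 1 (2 / su) := by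
          rw [hw_def]; field_simp
        have h2 : min 1 (2 / su) ≤ 2 / su := min_le_right _ _
        have h3 : (min 1 (2 / su)) ^ 2 ≤ (2 / su) ^ 2 := by
          apply sq_le_sq'
          · linarith
          · exact h2
        have h4 : su ^ 2 = u := by rw [hsu_def]; exact Real.sq_sqrt hu.le
        have h5 : (2 / su) ^ 2 = 4 / u := by rw [div_pow, h4]; norm_num
        rw [h1, mul_pow]
        calc (b * t / 2) ^ 2 * (min 1 (2 / su)) ^ 2 ≤ (b * t / 2) ^ 2 * (2 / su) ^ 2 :=
              mul_le_mul_of_nonneg_left h3 (by positivity)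
          _ = (b * t / 2) ^ 2 * (4 / u) := by rw [h5]
          _ = b * t ^ 3 / ℓ := by rw [hu_def]; field_simp; ring
      have hden : b * t ^ 3 / ℓ ≤ 2 * (2 * t * s * (t - s)) := by
        have hsa : a ≤ s := hsA.1
        rw [ha_def] at hsa
        have hsa' : b * t ≤ 2 * ℓ * s := by
          rw [div_mul_eq_mul_div, div_div, div_le_iff₀ (by positivity)] at hsa
          linarith
        rw [div_le_iff₀ hl]
        have fact := mul_le_mul hsa' hts (by positivity) (by positivity)
        nlinarith [mul_le_mul_of_nonneg_left fact (by positivity : (0:ℝ) ≤ 2 * t)]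
      have hexcess : (ℓ * s - b * t) ^ 2 / (2 * t * s * (t - s)) ≤ 2 := by
        rw [div_le_iff₀ (by positivity)]
        calc (ℓ * s - b * t) ^ 2 ≤ (ℓ * w) ^ 2 := hnum
          _ ≤ b * t ^ 3 / ℓ := hlw
          _ ≤ 2 * (2 * t * s * (t - s)) := hden
      have hsum : (ℓ - b) ^ 2 / (2 * (t - s)) + b ^ 2 / (2 * s) ≤ ℓ ^ 2 / (2 * t) + 2 := by
        rw [hiden]; linarith
      have e1 : -(ℓ - b) ^ 2 / (2 * (t - s)) = -((ℓ - b) ^ 2 / (2 * (t - s))) := by ring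
      have e2 : -b ^ 2 / (2 * s) = -(b ^ 2 / (2 * s)) := by ring
      have e3 : -ℓ ^ 2 / (2 * t) = -(ℓ ^ 2 / (2 * t)) := by ring
      rw [e1, e2, e3]; linarith
    have hP1 : ℓ / (2 * t) ≤ (ℓ - b) / (t - s) := by
      rw [div_le_div_iff₀ (by positivity) hts0]
      nlinarith
    have hP2 : ℓ / t ≤ b / s := by
      rw [div_le_div_iff₀ ht hs0]
      linarith [hls_le]
    have hP3 : (Real.sqrt (2 * Real.pi * t))⁻¹ ≤ (Real.sqrt (2 * Real.pi * (t - s)))⁻¹ := by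
      apply inv_anti₀ (Real.sqrt_pos.mpr (by positivity))
      apply Real.sqrt_le_sqrt; nlinarith
    have hP4 : Real.sqrt (ℓ / (2 * Real.pi * b * t)) ≤ (Real.sqrt (2 * Real.pi * s))⁻¹ := by
      rw [← Real.sqrt_inv]
      apply Real.sqrt_le_sqrt
      rw [div_le_iff₀ (by positivity), inv_mul_eq_div, le_div_iff₀ (by positivity)]
      nlinarith
    have hP5 : Real.exp (-ℓ ^ 2 / (2 * t) + -2) ≤
        Real.exp (-(ℓ - b) ^ 2 / (2 * (t - s)) + -b ^ 2 / (2 * s)) := Real.exp_le_exp.mpr hexp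
    have h12 : ℓ / (2 * t) * (ℓ / t) ≤ (ℓ - b) / (t - s) * (b / s) :=
      mul_le_mul hP1 hP2 (by positivity) (by positivity)
    have h34 : (Real.sqrt (2 * Real.pi * t))⁻¹ * Real.sqrt (ℓ / (2 * Real.pi * b * t)) ≤
        (Real.sqrt (2 * Real.pi * (t - s)))⁻¹ * (Real.sqrt (2 * Real.pi * s))⁻¹ :=
      mul_le_mul hP3 hP4 (Real.sqrt_nonneg _) (by positivity)
    have h1234 := mul_le_mul h12 h34 (by positivity) (by positivity)
    exact mul_le_mul h1234 hP5 (Real.exp_pos _).le (by positivity)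
  have hsplit : (∫ s in a..a', fpd (ℓ - b) (t - s) * fpd b s) +
      (∫ s in a'..c0, fpd (ℓ - b) (t - s) * fpd b s) =
      ∫ s in a..c0, fpd (ℓ - b) (t - s) * fpd b s :=
    intervalIntegral.integral_add_adjacent_intervals hint1 hint2
  have hI1 : 0 ≤ ∫ s in a..a', fpd (ℓ - b) (t - s) * fpd b s := by
    apply intervalIntegral.integral_nonneg haa'
    intro s hs
    exact hnonneg s ⟨hs.1, hs.2.trans ha'c0⟩
  have hI2 : w * g ≤ ∫ s in a'..c0, fpd (ℓ - b) (t - s) * fpd b s := by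
    have h := intervalIntegral.integral_mono_on ha'c0
      (_root_.intervalIntegrable_const (c := g)) hint2 hpoint
    rwa [intervalIntegral.integral_const, smul_eq_mul,
      show c0 - a' = w by rw [ha'_def]; ring] at h
  have hItot : w * g ≤ ∫ s in a..c0, fpd (ℓ - b) (t - s) * fpd b s := by
    rw [← hsplit]; linarith
  refine le_trans ?_ hItot
  have hsqrt_id : b * Real.sqrt (ℓ / (2 * Real.pi * b * t)) = su / Real.sqrt (2 * Real.pi) := by
    rw [hsu_def, hu_def, ← Real.sqrt_div (by positivity), ← Real.sqrt_sq hb.le,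
      ← Real.sqrt_mul (by positivity)]
    congr 1
    field_simp
    ring
    rw [Real.sq_sqrt (sq_nonneg b)]
  have hfpd : fpd ℓ t = ℓ / t * ((Real.sqrt (2 * Real.pi * t))⁻¹ * E) := by
    rw [fpd, heatKernel_one _ _ ht, hE_def]
  have hK : 0 ≤ Real.exp (-2) * (ℓ / t) * (Real.sqrt (2 * Real.pi * t))⁻¹ * E /
      (4 * Real.sqrt (2 * Real.pi)) := by rw [hE_def]; positivity
  have hrhs : w * g = (Real.exp (-2) * (ℓ / t) * (Real.sqrt (2 * Real.pi * t))⁻¹ * E /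
      (4 * Real.sqrt (2 * Real.pi))) * (su * min 1 (2 / su)) := by
    have hS : Real.sqrt (ℓ / (2 * Real.pi * b * t)) = su / (Real.sqrt (2 * Real.pi) * b) := by
      rw [eq_div_iff (by positivity)]
      rw [show Real.sqrt (ℓ / (2 * Real.pi * b * t)) * (Real.sqrt (2 * Real.pi) * b)
        = b * Real.sqrt (ℓ / (2 * Real.pi * b * t)) * Real.sqrt (2 * Real.pi) by ring, hsqrt_id]
      field_simp
    rw [hw_def, hg_def, hS, Real.exp_add, ← hE_def]
    generalize min 1 (2 / su) = m2
    have h2π : Real.sqrt (2 * Real.pi) ≠ 0 := by positivity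
    have h2πt : Real.sqrt (2 * Real.pi * t) ≠ 0 := by positivity
    field_simp
    ring
  rw [hfpd, hrhs]
  have hre : Real.exp (-2) / (4 * Real.sqrt (2 * Real.pi)) * min 1 su *
      (ℓ / t * ((Real.sqrt (2 * Real.pi * t))⁻¹ * E)) =
      (Real.exp (-2) * (ℓ / t) * (Real.sqrt (2 * Real.pi * t))⁻¹ * E /
      (4 * Real.sqrt (2 * Real.pi))) * min 1 su := by ring
  rw [hre]
  exact mul_le_mul_of_nonneg_left (min_key su hsu) hK
end

section
/- Let d ≥ 1, ν = d/2 − 1, α ∈ ℝ, and p_t^{(d)}(x) = (2πt)^{−d/2} e^{−x²/(2t)}. There is a constant c > 0 depending only on d and α such that for all 0 < b < ℓ with ρ₁ := b/ℓ ≤ 1/2 and all t > 0, ∫_{ρ₁t/2}^{ρ₁t} p_{t−s}^{(d)}(ℓ−b) p_s^{(d)}(b) s^α ds ≥ c (ρ₁ t)^{α−ν} · min(√(t/(bℓ)), 1) · p_t^{(d)}(ℓ). -/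
open Real intervalIntegral

lemma keyA (b ℓ t s : ℝ) (hb : 0 < b) (h2b : 2*b ≤ ℓ) (ht : 0 < t) (hs0 : 0 < s)
    (hv1 : 2*(b*t - ℓ*s) ≤ b*t) (hv2 : 4*ℓ*(b*t - ℓ*s)^2 ≤ b*t^3) (hv0 : 0 ≤ b*t - ℓ*s) :
    (ℓ-b)^2 / (t - s) + b^2 / s ≤ ℓ^2/t + 3/4 := by
  have hl : 0 < ℓ := by linarith
  have hlb : 0 < ℓ - b := by linarith
  have hst : s < t := by nlinarith
  have hts : 0 < t - s := by linarith
  have hA : b^2/s ≤ b*ℓ/t + ℓ*(b*t - ℓ*s)/t^2 + 2*(ℓ*(b*t - ℓ*s)^2/(b*t^3)) := by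
    rw [div_le_iff₀ hs0, ← sub_nonneg]
    have hid : (b*ℓ/t + ℓ*(b*t - ℓ*s)/t^2 + 2*(ℓ*(b*t - ℓ*s)^2/(b*t^3))) * s - b^2
        = (b*t - ℓ*s)^2*(b*t-2*(b*t - ℓ*s))/(b*t^3) := by
      field_simp
      ring
    rw [hid]
    have h1 : 0 ≤ (b*t - ℓ*s)^2*(b*t-2*(b*t - ℓ*s)) :=
      mul_nonneg (sq_nonneg _) (by linarith)
    positivity
  have hB : (ℓ-b)^2/(t-s) ≤ (ℓ-b)*ℓ/t - ℓ*(b*t - ℓ*s)/t^2 + ℓ*(b*t - ℓ*s)^2/((ℓ-b)*t^3) := by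
    rw [div_le_iff₀ hts, ← sub_nonneg]
    have hid : ((ℓ-b)*ℓ/t - ℓ*(b*t - ℓ*s)/t^2 + ℓ*(b*t - ℓ*s)^2/((ℓ-b)*t^3)) * (t-s) - (ℓ-b)^2
        = (b*t - ℓ*s)^3/((ℓ-b)*t^3) := by
      field_simp
      ring
    rw [hid]
    positivity
  have hC : ℓ*(b*t - ℓ*s)^2/((ℓ-b)*t^3) ≤ ℓ*(b*t - ℓ*s)^2/(b*t^3) := by
    rw [div_le_div_iff₀ (by positivity) (by positivity)]
    nlinarith [mul_nonneg (mul_nonneg (mul_nonneg hl.le (sq_nonneg (b*t - ℓ*s))) (pow_pos ht 3).le)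
      (by linarith : (0:ℝ) ≤ ℓ - 2*b)]
  have hD : ℓ*(b*t - ℓ*s)^2/(b*t^3) ≤ 1/4 := by
    rw [div_le_iff₀ (by positivity)]
    nlinarith
  have hE : b*ℓ/t + (ℓ-b)*ℓ/t = ℓ^2/t := by
    field_simp; ring
  linarith

set_option maxHeartbeats 2000000 in
theorem stmt6 (d : ℕ) (hd : 1 ≤ d) (α : ℝ) :
    ∃ c : ℝ, 0 < c ∧ ∀ b ℓ t : ℝ, 0 < b → b < ℓ → b / ℓ ≤ 1 / 2 → 0 < t →
      c * (b / ℓ * t) ^ (α - ((d : ℝ) / 2 - 1)) * min (Real.sqrt (t / (b * ℓ))) 1 *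
          heatKernel d t ℓ ≤
        ∫ s in (b / ℓ * t / 2)..(b / ℓ * t),
          heatKernel d (t - s) (ℓ - b) * heatKernel d s b * s ^ α := by
  have hπ := Real.pi_pos
  refine ⟨(2*Real.pi)^(-(d:ℝ)/2) * 2^(-|α|) * Real.exp (-(3/8)) / 2, by positivity, ?_⟩
  intro b ℓ t hb hbl hρ ht
  have hl : 0 < ℓ := hb.trans hbl
  have h2b : 2*b ≤ ℓ := by
    rw [div_le_div_iff₀ hl (by norm_num)] at hρ; linarith
  obtain ⟨s₀, hs₀def⟩ : ∃ x : ℝ, x = b/ℓ*t := ⟨_, rfl⟩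
  rw [← hs₀def]
  have hs₀ : 0 < s₀ := hs₀def ▸ mul_pos (div_pos hb hl) ht
  have hls₀ : ℓ * s₀ = b * t := by rw [hs₀def]; field_simp
  have hs₀t : 2*s₀ ≤ t := by
    have : 2*(ℓ*s₀) ≤ ℓ*t := by rw [hls₀]; nlinarith
    nlinarith
  obtain ⟨M, hMdef⟩ : ∃ x : ℝ, x = min (Real.sqrt (t/(b*ℓ))) 1 := ⟨_, rfl⟩
  rw [← hMdef]
  have hM0 : 0 < M := hMdef ▸ lt_min (Real.sqrt_pos.mpr (by positivity)) one_pos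
  have hM1 : M ≤ 1 := hMdef ▸ min_le_right _ _
  have hM2 : M^2 ≤ t/(b*ℓ) := by
    calc M^2 ≤ (Real.sqrt (t/(b*ℓ)))^2 :=
          pow_le_pow_left₀ hM0.le (hMdef ▸ min_le_left _ _) 2
      _ = t/(b*ℓ) := Real.sq_sqrt (by positivity)
  obtain ⟨a, hadef⟩ : ∃ x : ℝ, x = s₀ - M/2*s₀ := ⟨_, rfl⟩
  have ha1 : s₀/2 ≤ a := by rw [hadef]; nlinarith
  have ha2 : a ≤ s₀ := by rw [hadef]; nlinarith [mul_pos hM0 hs₀]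
  have ha0 : 0 < a := lt_of_lt_of_le (by linarith) ha1
  have hexpneg : -(d:ℝ)/2 ≤ 0 := by
    have : (0:ℝ) ≤ (d:ℝ) := Nat.cast_nonneg d
    linarith
  -- continuity / integrability
  have hcont : ContinuousOn
      (fun s => heatKernel d (t-s) (ℓ-b) * heatKernel d s b * s^α) (Set.Icc (s₀/2) s₀) := by
    have hpos : ∀ x ∈ Set.Icc (s₀/2) s₀, 0 < x ∧ x < t := by
      intro x hx
      exact ⟨lt_of_lt_of_le (by linarith) hx.1, by linarith [hx.2]⟩
    simp only [heatKernel]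
    apply ContinuousOn.mul
    · apply ContinuousOn.mul
      · apply ContinuousOn.mul
        · apply ContinuousOn.rpow_const
          · exact (continuous_const.mul (continuous_const.sub continuous_id)).continuousOn
          · intro x hx
            exact Or.inl (ne_of_gt (mul_pos (by positivity : (0:ℝ) < 2*Real.pi)
              (sub_pos.mpr (hpos x hx).2)))
        · apply Real.continuous_exp.comp_continuousOn
          apply ContinuousOn.div continuousOn_const
            ((continuous_const.mul (continuous_const.sub continuous_id)).continuousOn)
          intro x hx
          exact ne_of_gt (mul_pos two_pos (sub_pos.mpr (hpos x hx).2))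
      · apply ContinuousOn.mul
        · apply ContinuousOn.rpow_const
          · exact (continuous_const.mul continuous_id).continuousOn
          · intro x hx
            exact Or.inl (ne_of_gt (mul_pos (by positivity : (0:ℝ) < 2*Real.pi)
              (hpos x hx).1))
        · apply Real.continuous_exp.comp_continuousOn
          apply ContinuousOn.div continuousOn_const
            ((continuous_const.mul continuous_id).continuousOn)
          intro x hx
          exact ne_of_gt (mul_pos two_pos (hpos x hx).1)
    · apply ContinuousOn.rpow_const continuousOn_id
      intro x hx
      exact Or.inl (ne_of_gt (hpos x hx).1)
  have hint : IntervalIntegrable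
      (fun s => heatKernel d (t-s) (ℓ-b) * heatKernel d s b * s^α) MeasureTheory.volume (s₀/2) s₀ := by
    apply ContinuousOn.intervalIntegrable
    rwa [Set.uIcc_of_le (by linarith)]
  have hint1 : IntervalIntegrable
      (fun s => heatKernel d (t-s) (ℓ-b) * heatKernel d s b * s^α) MeasureTheory.volume (s₀/2) a := by
    apply hint.mono_set
    rw [Set.uIcc_of_le (show s₀/2 ≤ a by linarith), Set.uIcc_of_le (show s₀/2 ≤ s₀ by linarith)]
    exact Set.Icc_subset_Icc le_rfl ha2
  have hint2 : IntervalIntegrable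
      (fun s => heatKernel d (t-s) (ℓ-b) * heatKernel d s b * s^α) MeasureTheory.volume a s₀ := by
    apply hint.mono_set
    rw [Set.uIcc_of_le (show s₀/2 ≤ s₀ by linarith), Set.uIcc_of_le ha2]
    exact Set.Icc_subset_Icc ha1 le_rfl
  -- pointwise lower bound on [a, s₀]
  obtain ⟨m, hmdef⟩ : ∃ x : ℝ, x = (2*Real.pi*t)^(-(d:ℝ)/2) * (2*Real.pi*s₀)^(-(d:ℝ)/2)
      * Real.exp (-ℓ^2/(2*t) + -(3/8)) * ((2:ℝ)^(-|α|) * s₀^α) := ⟨_, rfl⟩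
  have hpt : ∀ s ∈ Set.Icc a s₀,
      m ≤ heatKernel d (t-s) (ℓ-b) * heatKernel d s b * s^α := by
    intro s hs
    obtain ⟨hsa, hss⟩ := hs
    have hs1 : s₀/2 ≤ s := le_trans ha1 hsa
    have hspos : 0 < s := lt_of_lt_of_le (by linarith) hs1
    have hslt : s < t := by linarith
    have hts : 0 < t - s := by linarith
    have hveq : b*t - ℓ*s = ℓ*(s₀ - s) := by rw [← hls₀]; ring
    have hv0 : 0 ≤ b*t - ℓ*s := by rw [hveq]; nlinarith
    have hv1 : 2*(b*t - ℓ*s) ≤ b*t := by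
      rw [hveq, ← hls₀]; nlinarith
    have hv2 : 4*ℓ*(b*t - ℓ*s)^2 ≤ b*t^3 := by
      have hsq : (s₀ - s)^2 ≤ (M/2*s₀)^2 :=
        pow_le_pow_left₀ (by linarith) (by linarith) 2
      have hM2' : M^2 * (b*ℓ) ≤ t := by
        rw [← le_div_iff₀ (by positivity)]; exact hM2
      calc 4*ℓ*(b*t - ℓ*s)^2 = 4*ℓ^3*(s₀-s)^2 := by rw [hveq]; ring
        _ ≤ 4*ℓ^3*(M/2*s₀)^2 := by
            apply mul_le_mul_of_nonneg_left hsq (by positivity)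
        _ = ℓ*(ℓ*s₀)^2*M^2 := by ring
        _ = ℓ*(b*t)^2*M^2 := by rw [hls₀]
        _ ≤ b*t^3 := by nlinarith [mul_le_mul_of_nonneg_left hM2' (by positivity : (0:ℝ) ≤ b*t^2)]
    have hkey := keyA b ℓ t s hb h2b ht hspos hv1 hv2 hv0
    -- factor bounds
    have hp1 : (0:ℝ) < 2*Real.pi*(t-s) := by positivity
    have hp2 : (0:ℝ) < 2*Real.pi*s := by positivity
    have hF1 : (2*Real.pi*t)^(-(d:ℝ)/2) ≤ (2*Real.pi*(t-s))^(-(d:ℝ)/2) :=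
      Real.rpow_le_rpow_of_nonpos hp1 (by nlinarith) hexpneg
    have hF2 : (2*Real.pi*s₀)^(-(d:ℝ)/2) ≤ (2*Real.pi*s)^(-(d:ℝ)/2) :=
      Real.rpow_le_rpow_of_nonpos hp2 (by nlinarith) hexpneg
    have hF3 : Real.exp (-ℓ^2/(2*t) + -(3/8))
        ≤ Real.exp (-(ℓ-b)^2/(2*(t-s)) + -b^2/(2*s)) := by
      apply Real.exp_le_exp.mpr
      have e1 : (ℓ-b)^2/(2*(t-s)) = ((ℓ-b)^2/(t-s))/2 := by rw [div_div, mul_comm]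
      have e2 : b^2/(2*s) = (b^2/s)/2 := by rw [div_div, mul_comm]
      have e3 : ℓ^2/(2*t) = (ℓ^2/t)/2 := by rw [div_div, mul_comm]
      rw [neg_div, neg_div, neg_div, e1, e2, e3]
      linarith
    have hF4 : (2:ℝ)^(-|α|) * s₀^α ≤ s^α := by
      rcases le_or_gt 0 α with hα | hα
      · rw [abs_of_nonneg hα]
        have : (2:ℝ)^(-α) * s₀^α = (s₀/2)^α := by
          rw [Real.div_rpow hs₀.le (by norm_num), Real.rpow_neg (by norm_num)]
          ring
        rw [this]
        exact Real.rpow_le_rpow (by positivity) hs1 hα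
      · rw [abs_of_neg hα, neg_neg]
        have h1 : (2:ℝ)^α ≤ 1 :=
          Real.rpow_le_one_of_one_le_of_nonpos (by norm_num) hα.le
        have h2 : s₀^α ≤ s^α :=
          Real.rpow_le_rpow_of_nonpos hspos hss hα.le
        have h3 : (0:ℝ) < s₀^α := Real.rpow_pos_of_pos hs₀ α
        nlinarith [Real.rpow_pos_of_pos (show (0:ℝ) < 2 by norm_num) α]
    have hgs : heatKernel d (t-s) (ℓ-b) * heatKernel d s b * s^α
        = (2*Real.pi*(t-s))^(-(d:ℝ)/2) * (2*Real.pi*s)^(-(d:ℝ)/2)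
          * Real.exp (-(ℓ-b)^2/(2*(t-s)) + -b^2/(2*s)) * s^α := by
      simp only [heatKernel, Real.exp_add]; ring
    rw [hgs, hmdef]
    have q1 : (0:ℝ) ≤ (2*Real.pi*(t-s))^(-(d:ℝ)/2) := (Real.rpow_pos_of_pos hp1 _).le
    have q2 : (0:ℝ) ≤ (2*Real.pi*s₀)^(-(d:ℝ)/2) :=
      (Real.rpow_pos_of_pos (by positivity) _).le
    have q2' : (0:ℝ) ≤ (2*Real.pi*s)^(-(d:ℝ)/2) := (Real.rpow_pos_of_pos hp2 _).le
    have q3 : (0:ℝ) ≤ (2:ℝ)^(-|α|) * s₀^α :=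
      (mul_pos (Real.rpow_pos_of_pos (by norm_num) _) (Real.rpow_pos_of_pos hs₀ _)).le
    refine mul_le_mul (mul_le_mul (mul_le_mul hF1 hF2 q2 q1) hF3 (Real.exp_pos _).le
      (mul_nonneg q1 q2')) hF4 q3 ?_
    exact mul_nonneg (mul_nonneg q1 q2') (Real.exp_pos _).le
  -- put everything together
  have hmono : (s₀ - a) * m ≤ ∫ s in a..s₀,
      heatKernel d (t-s) (ℓ-b) * heatKernel d s b * s^α := by
    have h := intervalIntegral.integral_mono_on ha2
      (_root_.intervalIntegrable_const (c := m)) hint2 hpt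
    rwa [intervalIntegral.integral_const, smul_eq_mul] at h
  have hnn : (0:ℝ) ≤ ∫ s in (s₀/2)..a,
      heatKernel d (t-s) (ℓ-b) * heatKernel d s b * s^α := by
    apply intervalIntegral.integral_nonneg (by linarith)
    intro s hs
    have hspos : 0 < s := lt_of_lt_of_le (by linarith) hs.1
    have hts : 0 < t - s := by
      have := hs.2; linarith [ha2]
    have e1 : (0:ℝ) < (2*Real.pi*(t-s))^(-(d:ℝ)/2) := Real.rpow_pos_of_pos (by positivity) _
    have e2 : (0:ℝ) < (2*Real.pi*s)^(-(d:ℝ)/2) := Real.rpow_pos_of_pos (by positivity) _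
    have e3 : (0:ℝ) < s^α := Real.rpow_pos_of_pos hspos _
    simp only [heatKernel]
    positivity
  have hsplit : (∫ s in (s₀/2)..a, heatKernel d (t-s) (ℓ-b) * heatKernel d s b * s^α)
      + (∫ s in a..s₀, heatKernel d (t-s) (ℓ-b) * heatKernel d s b * s^α)
      = ∫ s in (s₀/2)..s₀, heatKernel d (t-s) (ℓ-b) * heatKernel d s b * s^α :=
    intervalIntegral.integral_add_adjacent_intervals hint1 hint2
  have hLHS : (2*Real.pi)^(-(d:ℝ)/2) * 2^(-|α|) * Real.exp (-(3/8)) / 2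
      * s₀ ^ (α - ((d:ℝ)/2 - 1)) * M * heatKernel d t ℓ = (s₀ - a) * m := by
    have hrw : α - ((d:ℝ)/2 - 1) = α + (-(d:ℝ)/2) + 1 := by ring
    rw [hrw, Real.rpow_add hs₀, Real.rpow_add hs₀, Real.rpow_one, hmdef,
      Real.mul_rpow (by positivity : (0:ℝ) ≤ 2*Real.pi) hs₀.le, Real.exp_add]
    simp only [heatKernel, hadef]
    ring
  calc (2*Real.pi)^(-(d:ℝ)/2) * 2^(-|α|) * Real.exp (-(3/8)) / 2
      * s₀ ^ (α - ((d:ℝ)/2 - 1)) * M * heatKernel d t ℓ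
      = (s₀ - a) * m := hLHS
    _ ≤ ∫ s in a..s₀, heatKernel d (t-s) (ℓ-b) * heatKernel d s b * s^α := hmono
    _ ≤ ∫ s in (s₀/2)..s₀, heatKernel d (t-s) (ℓ-b) * heatKernel d s b * s^α := by
        rw [← hsplit]; linarith
end
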